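/- arXiv:1006.1987 — 6 statements merged into one kernel-verified Lean document; each statement's English description precedes it below -/
import Mathlib

section
/- Let H be a complex Hilbert space and T a bounded linear operator on H. Then T is similar to an isometry (i.e., there exist a bounded invertible operator S on H and a linear isometry U : H → H with T = S⁻¹ ∘ U ∘ S) if and only if there exists a constant k > 0 such that for every x ∈ H and every n ∈ ℕ, (1/k)‖x‖ ≤ ‖Tⁿx‖ ≤ k‖x‖. -/
set_option synthInstance.maxHeartbeats 1000000
set_option maxHeartbeats 1000000

open Filter Finset ComplexConjugate
open scoped Topology NNReal

local notation "⟪" x ", " y "⟫" => @inner ℂ _ _ x y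

section Aux

variable {H : Type*} [NormedAddCommGroup H] [InnerProductSpace ℂ H] [CompleteSpace H]

/-- The hard (reverse) direction of Sz.-Nagy's theorem. -/
private lemma sznagy_reverse (T : H →L[ℂ] H) {k : ℝ} (hk : 0 < k)
    (hb : ∀ (x : H) (n : ℕ), (1 / k) * ‖x‖ ≤ ‖(T ^ n) x‖ ∧ ‖(T ^ n) x‖ ≤ k * ‖x‖) :
    ∃ (S : H ≃L[ℂ] H) (U : H →ₗᵢ[ℂ] H), ∀ x : H, T x = S.symm (U (S x)) := by
  classical
  set φ : Ultrafilter ℕ := Ultrafilter.of atTop with hφ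
  have hφle : (φ : Filter ℕ) ≤ atTop := Ultrafilter.of_le atTop
  set a : H → H → ℕ → ℂ :=
    fun x y N => ((N : ℂ) + 1)⁻¹ * ∑ i ∈ range (N + 1), ⟪(T ^ i) x, (T ^ i) y⟫ with ha
  -- bound on the individual terms
  have hterm : ∀ (x y : H) (i : ℕ), ‖(⟪(T ^ i) x, (T ^ i) y⟫ : ℂ)‖ ≤ k ^ 2 * (‖x‖ * ‖y‖) := by
    intro x y i
    calc ‖(⟪(T ^ i) x, (T ^ i) y⟫ : ℂ)‖ ≤ ‖(T ^ i) x‖ * ‖(T ^ i) y‖ := norm_inner_le_norm _ _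
      _ ≤ (k * ‖x‖) * (k * ‖y‖) :=
          mul_le_mul (hb x i).2 (hb y i).2 (norm_nonneg _) (by positivity)
      _ = k ^ 2 * (‖x‖ * ‖y‖) := by ring
  have hinvnorm : ∀ N : ℕ, ‖((N : ℂ) + 1)⁻¹‖ = ((N : ℝ) + 1)⁻¹ := by
    intro N
    rw [norm_inv]
    congr 1
    have : ((N : ℂ) + 1) = ((N + 1 : ℕ) : ℂ) := by push_cast; ring
    rw [this, Complex.norm_natCast]
    push_cast; ring
  -- bound on the averages
  have havg : ∀ (x y : H) (N : ℕ), ‖a x y N‖ ≤ k ^ 2 * (‖x‖ * ‖y‖) := by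
    intro x y N
    rw [ha]
    simp only [norm_mul, hinvnorm]
    have h2 : ‖∑ i ∈ range (N + 1), (⟪(T ^ i) x, (T ^ i) y⟫ : ℂ)‖
        ≤ ((N : ℝ) + 1) * (k ^ 2 * (‖x‖ * ‖y‖)) := by
      calc ‖∑ i ∈ range (N + 1), (⟪(T ^ i) x, (T ^ i) y⟫ : ℂ)‖
          ≤ ∑ i ∈ range (N + 1), ‖(⟪(T ^ i) x, (T ^ i) y⟫ : ℂ)‖ := norm_sum_le _ _
        _ ≤ ∑ _i ∈ range (N + 1), k ^ 2 * (‖x‖ * ‖y‖) :=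
            Finset.sum_le_sum fun i _ => hterm x y i
        _ = ((N : ℝ) + 1) * (k ^ 2 * (‖x‖ * ‖y‖)) := by
            rw [Finset.sum_const, Finset.card_range, nsmul_eq_mul]; push_cast; ring
    calc ((N : ℝ) + 1)⁻¹ * ‖∑ i ∈ range (N + 1), (⟪(T ^ i) x, (T ^ i) y⟫ : ℂ)‖
        ≤ ((N : ℝ) + 1)⁻¹ * (((N : ℝ) + 1) * (k ^ 2 * (‖x‖ * ‖y‖))) :=
          mul_le_mul_of_nonneg_left h2 (by positivity)
      _ = k ^ 2 * (‖x‖ * ‖y‖) := by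
          have : ((N : ℝ) + 1) ≠ 0 := by positivity
          field_simp
  -- existence of ultrafilter limits
  have hex : ∀ x y : H, ∃ L : ℂ, Tendsto (a x y) ↑φ (𝓝 L) := by
    intro x y
    obtain ⟨L, -, hL⟩ := (isCompact_closedBall (0 : ℂ) (k ^ 2 * (‖x‖ * ‖y‖))).ultrafilter_le_nhds
      (φ.map (a x y)) (by
        rw [Ultrafilter.coe_map, le_principal_iff, Filter.mem_map]
        exact Filter.univ_mem' fun N => by
          simpa [Metric.mem_closedBall, dist_zero_right] using havg x y N)
    exact ⟨L, hL⟩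
  choose p hp using hex
  have huniq : ∀ {x y : H} {L : ℂ}, Tendsto (a x y) ↑φ (𝓝 L) → p x y = L :=
    fun h => tendsto_nhds_unique (hp _ _) h
  -- algebraic properties of p
  have hadd_right : ∀ x y z : H, p x (y + z) = p x y + p x z := by
    intro x y z
    refine huniq ?_
    have h : a x (y + z) = fun N => a x y N + a x z N := by
      funext N
      simp only [ha, map_add, inner_add_right, Finset.sum_add_distrib]
      ring
    rw [h]
    exact (hp x y).add (hp x z)
  have hsmul_right : ∀ (x : H) (c : ℂ) (y : H), p x (c • y) = c * p x y := by
    intro x c y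
    refine huniq ?_
    have h : a x (c • y) = fun N => c * a x y N := by
      funext N
      simp only [ha, map_smul, inner_smul_right, ← Finset.mul_sum]
      ring
    rw [h]
    exact (hp x y).const_mul c
  have hconj : ∀ x y : H, p y x = conj (p x y) := by
    intro x y
    refine huniq ?_
    have h : a y x = fun N => conj (a x y N) := by
      funext N
      simp only [ha, map_mul, map_sum, inner_conj_symm, map_inv₀, map_add, map_one,
        Complex.conj_natCast]
    rw [h]
    exact (Complex.continuous_conj.tendsto _).comp (hp x y)
  have hadd_left : ∀ x y z : H, p (x + y) z = p x z + p y z := by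
    intro x y z
    rw [hconj z (x + y), hadd_right z x y, map_add, ← hconj z x, ← hconj z y]
  have hsmul_left : ∀ (c : ℂ) (x y : H), p (c • x) y = conj c * p x y := by
    intro c x y
    rw [hconj y (c • x), hsmul_right y c x, map_mul, ← hconj y x]
  -- shift invariance
  have hshift : ∀ x y : H, p (T x) (T y) = p x y := by
    intro x y
    have key : ∀ N : ℕ, a (T x) (T y) N
        = a x y N + ((N : ℂ) + 1)⁻¹ * (⟪(T ^ (N + 1)) x, (T ^ (N + 1)) y⟫ - ⟪x, y⟫) := by
      intro N
      have h1 : ∀ i : ℕ, (⟪(T ^ i) (T x), (T ^ i) (T y)⟫ : ℂ)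
          = ⟪(T ^ (i + 1)) x, (T ^ (i + 1)) y⟫ := by
        intro i
        rw [pow_succ]
        simp [ContinuousLinearMap.mul_apply]
      have h3 := Finset.sum_range_sub (fun i => (⟪(T ^ i) x, (T ^ i) y⟫ : ℂ)) (N + 1)
      rw [Finset.sum_sub_distrib] at h3
      simp only [pow_zero, ContinuousLinearMap.one_apply] at h3
      have h2 : ∑ i ∈ range (N + 1), (⟪(T ^ (i + 1)) x, (T ^ (i + 1)) y⟫ : ℂ)
          = ∑ i ∈ range (N + 1), (⟪(T ^ i) x, (T ^ i) y⟫ : ℂ)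
            + ((⟪(T ^ (N + 1)) x, (T ^ (N + 1)) y⟫ : ℂ) - ⟪x, y⟫) := by
        linear_combination h3
      simp only [ha, h1, h2]
      ring
    refine huniq ?_
    have hz : Tendsto (fun N : ℕ =>
        ((N : ℂ) + 1)⁻¹ * ((⟪(T ^ (N + 1)) x, (T ^ (N + 1)) y⟫ : ℂ) - ⟪x, y⟫)) atTop (𝓝 0) := by
      apply squeeze_zero_norm
        (a := fun N : ℕ => (1 / ((N : ℝ) + 1)) * (k ^ 2 * (‖x‖ * ‖y‖) + ‖(⟪x, y⟫ : ℂ)‖))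
      · intro N
        rw [norm_mul, hinvnorm, one_div]
        refine mul_le_mul_of_nonneg_left ?_ (by positivity)
        calc ‖(⟪(T ^ (N + 1)) x, (T ^ (N + 1)) y⟫ : ℂ) - ⟪x, y⟫‖
            ≤ ‖(⟪(T ^ (N + 1)) x, (T ^ (N + 1)) y⟫ : ℂ)‖ + ‖(⟪x, y⟫ : ℂ)‖ := norm_sub_le _ _
          _ ≤ k ^ 2 * (‖x‖ * ‖y‖) + ‖(⟪x, y⟫ : ℂ)‖ := by
              exact add_le_add_left (hterm x y (N + 1)) _
      · simpa using tendsto_one_div_add_atTop_nhds_zero_nat.mul_const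
          (k ^ 2 * (‖x‖ * ‖y‖) + ‖(⟪x, y⟫ : ℂ)‖)
    have h := (hp x y).add ((hz.mono_left hφle))
    rw [add_zero] at h
    exact h.congr fun N => (key N).symm
  -- reality and bounds of p x x
  have hself : ∀ x : H, p x x = ((p x x).re : ℂ) := by
    intro x
    exact (Complex.conj_eq_iff_re.mp (hconj x x).symm).symm
  have havg_re : ∀ (x : H) (N : ℕ),
      (a x x N).re = ((N : ℝ) + 1)⁻¹ * ∑ i ∈ range (N + 1), ‖(T ^ i) x‖ ^ 2 := by
    intro x N
    have : a x x N
        = ((((N : ℝ) + 1)⁻¹ * ∑ i ∈ range (N + 1), ‖(T ^ i) x‖ ^ 2 : ℝ) : ℂ) := by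
      simp only [ha, inner_self_eq_norm_sq_to_K]
      push_cast
      ring_nf
      norm_cast
    rw [this, Complex.ofReal_re]
  have hlow : ∀ x : H, (1 / k ^ 2) * ‖x‖ ^ 2 ≤ (p x x).re := by
    intro x
    have hre : Tendsto (fun N => (a x x N).re) ↑φ (𝓝 ((p x x).re)) :=
      (Complex.continuous_re.tendsto _).comp (hp x x)
    refine ge_of_tendsto' hre fun N => ?_
    rw [havg_re]
    have h1 : ∀ i ∈ range (N + 1), (1 / k ^ 2) * ‖x‖ ^ 2 ≤ ‖(T ^ i) x‖ ^ 2 := by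
      intro i _
      have := (hb x i).1
      calc (1 / k ^ 2) * ‖x‖ ^ 2 = ((1 / k) * ‖x‖) ^ 2 := by ring
        _ ≤ ‖(T ^ i) x‖ ^ 2 := by
            have h0 : 0 ≤ (1 / k) * ‖x‖ := by positivity
            exact pow_le_pow_left₀ h0 this 2
    have h2 : ((N : ℝ) + 1) * ((1 / k ^ 2) * ‖x‖ ^ 2)
        ≤ ∑ i ∈ range (N + 1), ‖(T ^ i) x‖ ^ 2 := by
      calc ((N : ℝ) + 1) * ((1 / k ^ 2) * ‖x‖ ^ 2)
          = ∑ _i ∈ range (N + 1), (1 / k ^ 2) * ‖x‖ ^ 2 := by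
            rw [Finset.sum_const, Finset.card_range, nsmul_eq_mul]; push_cast; ring
        _ ≤ ∑ i ∈ range (N + 1), ‖(T ^ i) x‖ ^ 2 := Finset.sum_le_sum h1
    calc (1 / k ^ 2) * ‖x‖ ^ 2
        = ((N : ℝ) + 1)⁻¹ * (((N : ℝ) + 1) * ((1 / k ^ 2) * ‖x‖ ^ 2)) := by
          have : ((N : ℝ) + 1) ≠ 0 := by positivity
          field_simp
      _ ≤ ((N : ℝ) + 1)⁻¹ * ∑ i ∈ range (N + 1), ‖(T ^ i) x‖ ^ 2 :=
          mul_le_mul_of_nonneg_left h2 (by positivity)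
  have hnorm_p : ∀ x y : H, ‖p x y‖ ≤ k ^ 2 * (‖x‖ * ‖y‖) :=
    fun x y => le_of_tendsto' (hp x y).norm (havg x y)
  -- construction of the operator A with ⟪A x, y⟫ = p x y
  have hlin : ∀ x : H, ∃ Ax : H, ∀ y : H, ⟪Ax, y⟫ = p x y := by
    intro x
    let f : H →ₗ[ℂ] ℂ :=
      { toFun := fun y => p x y
        map_add' := hadd_right x
        map_smul' := fun c y => hsmul_right x c y }
    let fC : H →L[ℂ] ℂ := LinearMap.mkContinuous f (k ^ 2 * ‖x‖) (fun y => by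
      calc ‖p x y‖ ≤ k ^ 2 * (‖x‖ * ‖y‖) := hnorm_p x y
        _ = (k ^ 2 * ‖x‖) * ‖y‖ := by ring)
    exact ⟨(InnerProductSpace.toDual ℂ H).symm fC,
      fun y => InnerProductSpace.toDual_symm_apply⟩
  choose A₀ hA₀ using hlin
  have hA₀add : ∀ x x' : H, A₀ (x + x') = A₀ x + A₀ x' := by
    intro x x'
    refine ext_inner_right ℂ fun y => ?_
    rw [hA₀, inner_add_left, hA₀, hA₀, hadd_left]
  have hA₀smul : ∀ (c : ℂ) (x : H), A₀ (c • x) = c • A₀ x := by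
    intro c x
    refine ext_inner_right ℂ fun y => ?_
    rw [hA₀, inner_smul_left, hA₀, hsmul_left]
  have hA₀bound : ∀ x : H, ‖A₀ x‖ ≤ k ^ 2 * ‖x‖ := by
    intro x
    by_cases h0 : A₀ x = 0
    · rw [h0, norm_zero]; positivity
    · have hpos : 0 < ‖A₀ x‖ := norm_pos_iff.mpr h0
      have h1 : ‖A₀ x‖ * ‖A₀ x‖ ≤ (k ^ 2 * ‖x‖) * ‖A₀ x‖ := by
        have h2 : (⟪A₀ x, A₀ x⟫ : ℂ) = p x (A₀ x) := hA₀ x (A₀ x)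
        have h3 : ‖(⟪A₀ x, A₀ x⟫ : ℂ)‖ = ‖A₀ x‖ * ‖A₀ x‖ := by
          rw [inner_self_eq_norm_sq_to_K, norm_pow, RCLike.norm_ofReal,
            abs_norm, sq]
        calc ‖A₀ x‖ * ‖A₀ x‖ = ‖p x (A₀ x)‖ := by rw [← h2, h3]
          _ ≤ k ^ 2 * (‖x‖ * ‖A₀ x‖) := hnorm_p x (A₀ x)
          _ = (k ^ 2 * ‖x‖) * ‖A₀ x‖ := by ring
      exact le_of_mul_le_mul_right h1 hpos
  let A : H →L[ℂ] H := LinearMap.mkContinuous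
    { toFun := A₀, map_add' := hA₀add, map_smul' := hA₀smul } (k ^ 2) hA₀bound
  have hA : ∀ x y : H, ⟪A x, y⟫ = p x y := fun x y => hA₀ x y
  have hxAy : ∀ x y : H, ⟪x, A y⟫ = p x y := by
    intro x y
    rw [← inner_conj_symm, hA, hconj x y, Complex.conj_conj]
  have hAsa : IsSelfAdjoint A := by
    rw [ContinuousLinearMap.isSelfAdjoint_iff']
    refine ContinuousLinearMap.ext fun x => ext_inner_right ℂ fun y => ?_
    rw [ContinuousLinearMap.adjoint_inner_left, hA, hxAy]
  have hApos : (0 : H →L[ℂ] H) ≤ A := by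
    rw [ContinuousLinearMap.nonneg_iff_isPositive]
    refine ⟨ContinuousLinearMap.isSelfAdjoint_iff_isSymmetric.mp hAsa, fun x => ?_⟩
    have h1 := hlow x
    have h2 : ContinuousLinearMap.reApplyInnerSelf A x = (p x x).re := by
      rw [ContinuousLinearMap.reApplyInnerSelf_apply, hA, RCLike.re_to_complex]
    rw [h2]
    exact le_trans (by positivity) h1
  have hAu : IsUnit A := by
    have hcpos : (0 : ℝ) < 1 / k ^ 2 := by positivity
    refine ContinuousLinearMap.isUnit_of_forall_le_norm_inner_map A
      (c := Real.toNNReal (1 / k ^ 2)) (by simpa using hcpos) fun x => ?_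
    have hcoe : ((Real.toNNReal (1 / k ^ 2) : ℝ≥0) : ℝ) = 1 / k ^ 2 :=
      Real.coe_toNNReal _ hcpos.le
    rw [hcoe, hA]
    calc ‖x‖ ^ 2 * (1 / k ^ 2) = (1 / k ^ 2) * ‖x‖ ^ 2 := by ring
      _ ≤ (p x x).re := hlow x
      _ ≤ ‖p x x‖ := Complex.re_le_norm _
  -- square root
  set S : H →L[ℂ] H := CFC.sqrt A with hSdef
  have hS2 : S ^ 2 = A := CFC.sq_sqrt A hApos
  have hSsa : IsSelfAdjoint S := IsSelfAdjoint.of_nonneg (CFC.sqrt_nonneg A)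
  have hSadj : ∀ x z : H, ⟪S x, z⟫ = ⟪x, S z⟫ := by
    intro x z
    conv_lhs => rw [← ContinuousLinearMap.isSelfAdjoint_iff'.mp hSsa]
    rw [ContinuousLinearMap.adjoint_inner_left]
  have hSS : ∀ y : H, S (S y) = A y := by
    intro y
    have : (S ^ 2) y = A y := by rw [hS2]
    rwa [pow_two, ContinuousLinearMap.mul_apply] at this
  have hSinner : ∀ x y : H, ⟪S x, S y⟫ = p x y := by
    intro x y
    rw [hSadj, hSS, hxAy]
  have hSnormsq : ∀ x : H, ‖S x‖ ^ 2 = (p x x).re := by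
    intro x
    have h1 : RCLike.re (⟪S x, S x⟫ : ℂ) = ‖S x‖ ^ 2 := inner_self_eq_norm_sq (S x)
    rw [← h1, hSinner, RCLike.re_to_complex]
  -- S is invertible
  have hSu : IsUnit S := by
    obtain ⟨u, hu⟩ := hAu
    have hcom : Commute S (u : H →L[ℂ] H) := by
      rw [hu, ← hS2]
      exact (Commute.refl S).pow_right 2
    have hcom' : Commute S ((u⁻¹ : (H →L[ℂ] H)ˣ) : H →L[ℂ] H) := hcom.units_inv_right
    refine isUnit_iff_exists.mpr ⟨S * ↑u⁻¹, ?_, ?_⟩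
    · rw [← mul_assoc, ← pow_two, hS2, ← hu, Units.mul_inv]
    · rw [hcom'.eq, mul_assoc, ← pow_two, hS2, ← hu, Units.inv_mul]
  let E : H ≃L[ℂ] H := ContinuousLinearEquiv.ofUnit hSu.unit
  have hE : ∀ x : H, E x = S x := fun x =>
    by rw [show E x = (hSu.unit : H →L[ℂ] H) x from rfl, hSu.unit_spec]
  -- the isometry
  have hiso : ∀ z : H, ‖S (T z)‖ = ‖S z‖ := by
    intro z
    have h : ‖S (T z)‖ ^ 2 = ‖S z‖ ^ 2 := by
      rw [hSnormsq, hSnormsq, hshift]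
    exact (pow_left_inj₀ (norm_nonneg _) (norm_nonneg _) two_ne_zero).mp h
  let U0 : H →L[ℂ] H := S.comp (T.comp (E.symm : H →L[ℂ] H))
  have hU0 : ∀ x : H, U0 x = S (T (E.symm x)) := fun x => rfl
  let U : H →ₗᵢ[ℂ] H :=
    { toLinearMap := (U0 : H →ₗ[ℂ] H)
      norm_map' := fun x => by
        show ‖U0 x‖ = ‖x‖
        rw [hU0, hiso, ← hE, E.apply_symm_apply] }
  refine ⟨E, U, fun x => ?_⟩
  have hU : U (E x) = E (T x) := by
    show U0 (E x) = E (T x)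
    rw [hU0, E.symm_apply_apply, hE]
  rw [hU, E.symm_apply_apply]

end Aux

/-- **Sz.-Nagy's theorem.** A bounded linear operator `T` on a complex Hilbert
space is similar to an isometry (i.e. `T = S⁻¹ ∘ U ∘ S` for some bounded
invertible `S` and linear isometry `U`) if and only if there is a constant
`k > 0` with `(1/k)‖x‖ ≤ ‖Tⁿx‖ ≤ k‖x‖` for all `x` and all `n : ℕ`. -/
theorem similar_to_isometry_iff_power_bounded_below_above
    {H : Type*} [NormedAddCommGroup H] [InnerProductSpace ℂ H] [CompleteSpace H]
    (T : H →L[ℂ] H) :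
    (∃ (S : H ≃L[ℂ] H) (U : H →ₗᵢ[ℂ] H), ∀ x : H, T x = S.symm (U (S x))) ↔
      (∃ k : ℝ, 0 < k ∧ ∀ (x : H) (n : ℕ),
        (1 / k) * ‖x‖ ≤ ‖(T ^ n) x‖ ∧ ‖(T ^ n) x‖ ≤ k * ‖x‖) := by
  constructor
  · rintro ⟨S, U, hT⟩
    set k : ℝ := ‖(S : H →L[ℂ] H)‖ * ‖(S.symm : H →L[ℂ] H)‖ + 1 with hkdef
    have hk0 : (0 : ℝ) ≤ ‖(S : H →L[ℂ] H)‖ * ‖(S.symm : H →L[ℂ] H)‖ := by positivity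
    have hkpos : 0 < k := by positivity
    refine ⟨k, hkpos, fun x n => ?_⟩
    have key : ∀ (n : ℕ) (x : H), ‖S ((T ^ n) x)‖ = ‖S x‖ := by
      intro n
      induction n with
      | zero => intro x; simp
      | succ n ih =>
        intro x
        have h1 : (T ^ (n + 1)) x = (T ^ n) (T x) := by
          rw [pow_succ, ContinuousLinearMap.mul_apply]
        rw [h1, ih (T x), hT x, S.apply_symm_apply, U.norm_map]
    have hS1 : ∀ z : H, ‖S z‖ ≤ ‖(S : H →L[ℂ] H)‖ * ‖z‖ :=
      fun z => (S : H →L[ℂ] H).le_opNorm z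
    have hS2 : ∀ z : H, ‖S.symm z‖ ≤ ‖(S.symm : H →L[ℂ] H)‖ * ‖z‖ :=
      fun z => (S.symm : H →L[ℂ] H).le_opNorm z
    constructor
    · -- lower bound
      have h2 : ‖x‖ ≤ k * ‖(T ^ n) x‖ := by
        calc ‖x‖ = ‖S.symm (S x)‖ := by rw [S.symm_apply_apply]
          _ ≤ ‖(S.symm : H →L[ℂ] H)‖ * ‖S x‖ := hS2 (S x)
          _ = ‖(S.symm : H →L[ℂ] H)‖ * ‖S ((T ^ n) x)‖ := by rw [key n x]
          _ ≤ ‖(S.symm : H →L[ℂ] H)‖ * (‖(S : H →L[ℂ] H)‖ * ‖(T ^ n) x‖) :=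
              mul_le_mul_of_nonneg_left (hS1 _) (norm_nonneg (S.symm : H →L[ℂ] H))
          _ ≤ k * ‖(T ^ n) x‖ := by
              rw [← mul_assoc]
              refine mul_le_mul_of_nonneg_right ?_ (norm_nonneg _)
              rw [hkdef]; nlinarith [norm_nonneg (S : H →L[ℂ] H),
                norm_nonneg (S.symm : H →L[ℂ] H)]
      rw [one_div, inv_mul_le_iff₀ hkpos]
      exact h2
    · -- upper bound
      calc ‖(T ^ n) x‖ = ‖S.symm (S ((T ^ n) x))‖ := by rw [S.symm_apply_apply]
        _ ≤ ‖(S.symm : H →L[ℂ] H)‖ * ‖S ((T ^ n) x)‖ := hS2 _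
        _ = ‖(S.symm : H →L[ℂ] H)‖ * ‖S x‖ := by rw [key n x]
        _ ≤ ‖(S.symm : H →L[ℂ] H)‖ * (‖(S : H →L[ℂ] H)‖ * ‖x‖) :=
            mul_le_mul_of_nonneg_left (hS1 _) (norm_nonneg (S.symm : H →L[ℂ] H))
        _ ≤ k * ‖x‖ := by
            rw [← mul_assoc]
            refine mul_le_mul_of_nonneg_right ?_ (norm_nonneg _)
            rw [hkdef]; nlinarith [norm_nonneg (S : H →L[ℂ] H),
              norm_nonneg (S.symm : H →L[ℂ] H)]
  · rintro ⟨k, hk, hb⟩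
    exact sznagy_reverse T hk hb
end

section
/- Let ε ∈ {+1, −1}, α ∈ ℝ, let γ₁, …, γₙ be distinct real numbers and μ₁, …, μₙ < 0, and define r : ℝ ∖ {γ₁, …, γₙ} → ℝ by r(x) = ε·(x + α + Σᵢ₌₁ⁿ μᵢ/(x − γᵢ)). Then for every p with 1 ≤ p < ∞, the composition map C_r : f ↦ f ∘ r is a linear isometry of L^p(ℝ) into itself: for every f ∈ L^p(ℝ), f ∘ r ∈ L^p(ℝ) and ‖f ∘ r‖_p = ‖f‖_p. -/
open MeasureTheory Set Filter Polynomial Finset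
open scoped ENNReal Topology

namespace PolyaSzegoAux

variable {n : ℕ}

noncomputable def g (α : ℝ) (γ μ : Fin n → ℝ) (x : ℝ) : ℝ :=
  x + α + ∑ i, μ i / (x - γ i)

def I (γ : Fin n → ℝ) (k : Fin (n + 1)) : Set ℝ :=
  {x | (∀ i : Fin n, (i : ℕ) < (k : ℕ) → γ i < x) ∧
       ∀ i : Fin n, (k : ℕ) ≤ (i : ℕ) → x < γ i}

variable {α : ℝ} {γ μ : Fin n → ℝ} {k : Fin (n + 1)} {x y a b : ℝ}

lemma g_strictMonoOn (hμ : ∀ i, μ i < 0) : StrictMonoOn (g α γ μ) (I γ k) := by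
  intro u hu v hv huv
  have key : ∀ i : Fin n, μ i / (u - γ i) ≤ μ i / (v - γ i) := by
    intro i
    have hne : ∀ w : ℝ, w ∈ I γ k → w - γ i ≠ 0 := by
      intro w hw
      rcases lt_or_ge (i : ℕ) (k : ℕ) with h | h
      · exact sub_ne_zero.2 (hw.1 i h).ne'
      · exact sub_ne_zero.2 (hw.2 i h).ne
    have hprod : 0 < (u - γ i) * (v - γ i) := by
      rcases lt_or_ge (i : ℕ) (k : ℕ) with h | h
      · exact mul_pos (sub_pos.2 (hu.1 i h)) (sub_pos.2 (hv.1 i h))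
      · exact mul_pos_of_neg_of_neg (sub_neg.2 (hu.2 i h)) (sub_neg.2 (hv.2 i h))
    have hid : μ i / (v - γ i) - μ i / (u - γ i)
        = μ i * ((u - γ i) - (v - γ i)) / ((u - γ i) * (v - γ i)) := by
      have h1 := hne u hu
      have h2 := hne v hv
      field_simp
    have h0 : 0 ≤ μ i * ((u - γ i) - (v - γ i)) / ((u - γ i) * (v - γ i)) := by
      apply div_nonneg _ hprod.le
      nlinarith [(hμ i).le, huv]
    linarith [hid ▸ h0]
  have : ∑ i, μ i / (u - γ i) ≤ ∑ i, μ i / (v - γ i) :=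
    Finset.sum_le_sum fun i _ => key i
  simp only [g]
  linarith

lemma g_continuousAt (hx : ∀ i, x ≠ γ i) : ContinuousAt (g α γ μ) x := by
  have h1 : ContinuousAt (fun t : ℝ => t + α) x := by fun_prop
  have h2 : ContinuousAt (fun t : ℝ => ∑ i, μ i / (t - γ i)) x := by
    apply tendsto_finset_sum
    intro i _
    exact ContinuousAt.div continuousAt_const (by fun_prop) (sub_ne_zero.2 (hx i))
  exact h1.add h2


lemma tendsto_inv_sub_zero_of_atBot (c : ℝ) :
    Tendsto (fun x : ℝ => (x - c)⁻¹) atBot (𝓝 0) := by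
  have hx : Tendsto (fun x : ℝ => x - c) atBot atBot :=
    tendsto_atBot_add_const_right _ _ tendsto_id
  have h4 := (tendsto_neg_atBot_atTop.comp hx).inv_tendsto_atTop
  have h5 := h4.neg
  simp only [Function.comp_def, Pi.inv_apply, inv_neg, neg_neg, neg_zero] at h5
  exact h5

lemma tendsto_inv_sub_zero_of_atTop (c : ℝ) :
    Tendsto (fun x : ℝ => (x - c)⁻¹) atTop (𝓝 0) := by
  have hx : Tendsto (fun x : ℝ => x - c) atTop atTop :=
    tendsto_atTop_add_const_right _ _ tendsto_id
  exact hx.inv_tendsto_atTop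

lemma tendsto_g_atBot : Tendsto (g α γ μ) atBot atBot := by
  have h1 : Tendsto (fun x : ℝ => x + α) atBot atBot :=
    tendsto_atBot_add_const_right _ _ tendsto_id
  have h2 : Tendsto (fun x : ℝ => ∑ i, μ i / (x - γ i)) atBot (𝓝 0) := by
    have := tendsto_finset_sum (f := fun (i : Fin n) (x : ℝ) => μ i / (x - γ i))
      (a := fun _ => (0:ℝ)) Finset.univ (fun i _ => by
        simpa [div_eq_mul_inv] using (tendsto_inv_sub_zero_of_atBot (γ i)).const_mul (μ i))
    simpa using this
  exact h1.atBot_add h2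

lemma tendsto_g_atTop : Tendsto (g α γ μ) atTop atTop := by
  have h1 : Tendsto (fun x : ℝ => x + α) atTop atTop :=
    tendsto_atTop_add_const_right _ _ tendsto_id
  have h2 : Tendsto (fun x : ℝ => ∑ i, μ i / (x - γ i)) atTop (𝓝 0) := by
    have := tendsto_finset_sum (f := fun (i : Fin n) (x : ℝ) => μ i / (x - γ i))
      (a := fun _ => (0:ℝ)) Finset.univ (fun i _ => by
        simpa [div_eq_mul_inv] using (tendsto_inv_sub_zero_of_atTop (γ i)).const_mul (μ i))
    simpa using this
  exact h1.atTop_add h2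

lemma g_split (j : Fin n) : g α γ μ = fun x =>
    μ j / (x - γ j) + (x + α + ∑ i ∈ Finset.univ.erase j, μ i / (x - γ i)) := by
  funext x
  simp only [g]
  rw [← Finset.sum_erase_add _ _ (Finset.mem_univ j)]
  ring

lemma tendsto_g_pole_right (hγ : Function.Injective γ) (hμ : ∀ i, μ i < 0) (j : Fin n) :
    Tendsto (g α γ μ) (𝓝[>] (γ j)) atBot := by
  rw [g_split j]
  have h1 : Tendsto (fun x : ℝ => μ j / (x - γ j)) (𝓝[>] (γ j)) atBot := by
    have hx : Tendsto (fun x : ℝ => x - γ j) (𝓝[>] (γ j)) (𝓝[>] 0) := by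
      rw [tendsto_nhdsWithin_iff]
      constructor
      · have : Tendsto (fun x : ℝ => x - γ j) (𝓝 (γ j)) (𝓝 (γ j - γ j)) :=
          (continuous_id.sub continuous_const).tendsto _
        simpa using this.mono_left nhdsWithin_le_nhds
      · filter_upwards [self_mem_nhdsWithin] with x hx
        exact sub_pos.2 (Set.mem_Ioi.1 hx)
    have h2 : Tendsto (fun x : ℝ => (x - γ j)⁻¹) (𝓝[>] (γ j)) atTop :=
      tendsto_inv_nhdsGT_zero.comp hx
    simpa [div_eq_mul_inv] using h2.const_mul_atTop_of_neg (hμ j)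
  have h2 : Tendsto (fun x : ℝ => x + α + ∑ i ∈ Finset.univ.erase j, μ i / (x - γ i))
      (𝓝[>] (γ j)) (𝓝 (γ j + α + ∑ i ∈ Finset.univ.erase j, μ i / (γ j - γ i))) := by
    have hc : ContinuousAt (fun x : ℝ => x + α + ∑ i ∈ Finset.univ.erase j, μ i / (x - γ i))
        (γ j) := by
      apply ContinuousAt.add (by fun_prop)
      apply tendsto_finset_sum
      intro i hi
      have hij : i ≠ j := (Finset.mem_erase.1 hi).1
      exact ContinuousAt.div continuousAt_const (by fun_prop)
        (sub_ne_zero.2 fun h => hij (hγ h).symm)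
    exact hc.continuousWithinAt
  exact h1.atBot_add h2

lemma tendsto_g_pole_left (hγ : Function.Injective γ) (hμ : ∀ i, μ i < 0) (j : Fin n) :
    Tendsto (g α γ μ) (𝓝[<] (γ j)) atTop := by
  rw [g_split j]
  have h1 : Tendsto (fun x : ℝ => μ j / (x - γ j)) (𝓝[<] (γ j)) atTop := by
    have hx : Tendsto (fun x : ℝ => γ j - x) (𝓝[<] (γ j)) (𝓝[>] 0) := by
      rw [tendsto_nhdsWithin_iff]
      constructor
      · have : Tendsto (fun x : ℝ => γ j - x) (𝓝 (γ j)) (𝓝 (γ j - γ j)) :=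
          (continuous_const.sub continuous_id).tendsto _
        simpa using this.mono_left nhdsWithin_le_nhds
      · filter_upwards [self_mem_nhdsWithin] with x hx
        exact sub_pos.2 (Set.mem_Iio.1 hx)
    have h2 : Tendsto (fun x : ℝ => (γ j - x)⁻¹) (𝓝[<] (γ j)) atTop :=
      tendsto_inv_nhdsGT_zero.comp hx
    have h3 : Tendsto (fun x : ℝ => (-μ j) * (γ j - x)⁻¹) (𝓝[<] (γ j)) atTop :=
      h2.const_mul_atTop (by linarith [hμ j])
    refine h3.congr fun x => ?_
    rw [div_eq_mul_inv]
    rw [show (x - γ j)⁻¹ = -(γ j - x)⁻¹ by rw [← inv_neg, neg_sub]]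
    ring
  have h2 : Tendsto (fun x : ℝ => x + α + ∑ i ∈ Finset.univ.erase j, μ i / (x - γ i))
      (𝓝[<] (γ j)) (𝓝 (γ j + α + ∑ i ∈ Finset.univ.erase j, μ i / (γ j - γ i))) := by
    have hc : ContinuousAt (fun x : ℝ => x + α + ∑ i ∈ Finset.univ.erase j, μ i / (x - γ i))
        (γ j) := by
      apply ContinuousAt.add (by fun_prop)
      apply tendsto_finset_sum
      intro i hi
      have hij : i ≠ j := (Finset.mem_erase.1 hi).1
      exact ContinuousAt.div continuousAt_const (by fun_prop)
        (sub_ne_zero.2 fun h => hij (hγ h).symm)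
    exact hc.continuousWithinAt
  exact h1.atTop_add h2


lemma ne_pole_of_mem_I (hx : x ∈ I γ k) (i : Fin n) : x ≠ γ i := by
  rcases lt_or_ge (i : ℕ) (k : ℕ) with h | h
  · exact (hx.1 i h).ne'
  · exact (hx.2 i h).ne

lemma mem_I_of_between (hu : x ∈ I γ k) (hv : y ∈ I γ k) (h1 : x ≤ a) (h2 : a ≤ y) :
    a ∈ I γ k :=
  ⟨fun i hi => lt_of_lt_of_le (hu.1 i hi) h1, fun i hi => lt_of_le_of_lt h2 (hv.2 i hi)⟩

lemma exists_lt_in_I (hγ : StrictMono γ) (hμ : ∀ i, μ i < 0) (k : Fin (n + 1)) (y : ℝ) :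
    ∃ u ∈ I γ k, g α γ μ u < y := by
  rcases Nat.eq_zero_or_pos (k : ℕ) with hk0 | hkpos
  · have hmem : ∀ᶠ x : ℝ in atBot, x ∈ I γ k := by
      have hev : ∀ᶠ x : ℝ in atBot, ∀ i : Fin n, x < γ i :=
        eventually_all.2 fun i => eventually_lt_atBot (γ i)
      filter_upwards [hev] with x hx
      exact ⟨fun i hi => absurd hi (by omega), fun i _ => hx i⟩
    exact (hmem.and (tendsto_g_atBot.eventually_lt_atBot y)).exists
  · have hj : (k : ℕ) - 1 < n := by omega
    set j : Fin n := ⟨(k : ℕ) - 1, hj⟩ with hjdef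
    have hmem : ∀ᶠ x : ℝ in 𝓝[>] (γ j), x ∈ I γ k := by
      have hev : ∀ᶠ x : ℝ in 𝓝[>] (γ j), ∀ i : Fin n, (k : ℕ) ≤ (i : ℕ) → x < γ i := by
        refine eventually_all.2 fun i => ?_
        by_cases hi : (k : ℕ) ≤ (i : ℕ)
        · have hji : γ j < γ i := hγ (by rw [Fin.lt_def]; simp only [hjdef]; omega)
          exact eventually_nhdsWithin_of_eventually_nhds
            (eventually_of_mem (Iio_mem_nhds hji) fun x hx _ => hx)
        · filter_upwards with x h
          exact absurd h hi
      filter_upwards [self_mem_nhdsWithin, hev] with x hx1 hx2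
      refine ⟨fun i hi => ?_, hx2⟩
      have hle : γ i ≤ γ j := hγ.monotone (by rw [Fin.le_def]; simp only [hjdef]; omega)
      exact hle.trans_lt hx1
    exact (hmem.and ((tendsto_g_pole_right hγ.injective hμ j).eventually_lt_atBot y)).exists

lemma exists_gt_in_I (hγ : StrictMono γ) (hμ : ∀ i, μ i < 0) (k : Fin (n + 1)) (y : ℝ) :
    ∃ v ∈ I γ k, y < g α γ μ v := by
  rcases eq_or_lt_of_le (Nat.lt_succ_iff.1 k.isLt) with hkn | hkn
  · have hmem : ∀ᶠ x : ℝ in atTop, x ∈ I γ k := by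
      have hev : ∀ᶠ x : ℝ in atTop, ∀ i : Fin n, γ i < x :=
        eventually_all.2 fun i => eventually_gt_atTop (γ i)
      filter_upwards [hev] with x hx
      exact ⟨fun i _ => hx i, fun i hi => absurd hi (by omega)⟩
    exact (hmem.and (tendsto_g_atTop.eventually_gt_atTop y)).exists
  · set j : Fin n := ⟨(k : ℕ), hkn⟩ with hjdef
    have hmem : ∀ᶠ x : ℝ in 𝓝[<] (γ j), x ∈ I γ k := by
      have hev : ∀ᶠ x : ℝ in 𝓝[<] (γ j), ∀ i : Fin n, (i : ℕ) < (k : ℕ) → γ i < x := by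
        refine eventually_all.2 fun i => ?_
        by_cases hi : (i : ℕ) < (k : ℕ)
        · have hij : γ i < γ j := hγ (by rw [Fin.lt_def]; simp only [hjdef]; omega)
          exact eventually_nhdsWithin_of_eventually_nhds
            (eventually_of_mem (Ioi_mem_nhds hij) fun x hx _ => hx)
        · filter_upwards with x h
          exact absurd h hi
      filter_upwards [self_mem_nhdsWithin, hev] with x hx1 hx2
      refine ⟨hx2, fun i hi => ?_⟩
      have hle : γ j ≤ γ i := hγ.monotone (by rw [Fin.le_def]; simp only [hjdef]; omega)
      exact lt_of_lt_of_le (Set.mem_Iio.1 hx1) hle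
    exact (hmem.and ((tendsto_g_pole_left hγ.injective hμ j).eventually_gt_atTop y)).exists

lemma exists_root (hγ : StrictMono γ) (hμ : ∀ i, μ i < 0) (k : Fin (n + 1)) (y : ℝ) :
    ∃ x ∈ I γ k, g α γ μ x = y := by
  obtain ⟨u, hu, hgu⟩ := exists_lt_in_I (α := α) (μ := μ) hγ hμ k y
  obtain ⟨v, hv, hgv⟩ := exists_gt_in_I (α := α) (μ := μ) hγ hμ k y
  have huv : u < v := by
    by_contra h
    push_neg at h
    have := (g_strictMonoOn (α := α) hμ).monotoneOn hv hu h
    linarith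
  have hIcc : Set.Icc u v ⊆ I γ k := fun t ht => mem_I_of_between hu hv ht.1 ht.2
  have hcont : ContinuousOn (g α γ μ) (Set.Icc u v) := fun t ht =>
    (g_continuousAt (ne_pole_of_mem_I (hIcc ht))).continuousWithinAt
  have hy : y ∈ Set.Icc (g α γ μ u) (g α γ μ v) := ⟨hgu.le, hgv.le⟩
  obtain ⟨x, hx, hgx⟩ := intermediate_value_Icc huv.le hcont hy
  exact ⟨x, hIcc hx, hgx⟩

lemma I_disjoint (hk : x ∈ I γ k) {k' : Fin (n + 1)} (hk' : x ∈ I γ k') : k = k' := by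
  rcases lt_trichotomy k k' with h | h | h
  · exfalso
    have hkn : (k : ℕ) < n := by
      have := Fin.lt_def.1 h
      omega
    have h1 := hk.2 ⟨(k : ℕ), hkn⟩ (le_refl _)
    have h2 := hk'.1 ⟨(k : ℕ), hkn⟩ (by simpa using Fin.lt_def.1 h)
    exact absurd h1 (not_lt.2 h2.le)
  · exact h
  · exfalso
    have hkn : (k' : ℕ) < n := by
      have := Fin.lt_def.1 h
      omega
    have h1 := hk'.2 ⟨(k' : ℕ), hkn⟩ (le_refl _)
    have h2 := hk.1 ⟨(k' : ℕ), hkn⟩ (by simpa using Fin.lt_def.1 h)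
    exact absurd h1 (not_lt.2 h2.le)

lemma exists_mem_I (hγ : StrictMono γ) (hx : ∀ i, x ≠ γ i) : ∃ k : Fin (n + 1), x ∈ I γ k := by
  classical
  set s : Finset (Fin n) := Finset.univ.filter fun i => γ i < x with hs
  have hcard : s.card ≤ n := le_trans (Finset.card_filter_le _ _) (by simp)
  refine ⟨⟨s.card, by omega⟩, ?_, ?_⟩
  · intro i hi
    by_contra hlt
    push_neg at hlt
    have hxi : x < γ i := lt_of_le_of_ne hlt (hx i)
    have hsub : s.image Fin.val ⊆ Finset.range (i : ℕ) := by
      intro m hm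
      simp only [Finset.mem_image] at hm
      obtain ⟨j, hj, rfl⟩ := hm
      have hj' : γ j < x := (Finset.mem_filter.1 hj).2
      have : j < i := by
        by_contra hh
        push_neg at hh
        exact absurd (hγ.monotone hh) (not_le.2 (lt_trans hj' hxi))
      simpa using Fin.lt_def.1 this
    have : s.card ≤ (i : ℕ) := by
      calc s.card = (s.image Fin.val).card :=
            (Finset.card_image_of_injective _ Fin.val_injective).symm
        _ ≤ (Finset.range (i : ℕ)).card := Finset.card_le_card hsub
        _ = (i : ℕ) := Finset.card_range _
    simp only at hi
    omega
  · intro i hi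
    by_contra hlt
    push_neg at hlt
    have hxi : γ i < x := lt_of_le_of_ne hlt (Ne.symm (hx i))
    have hsub : Finset.range ((i : ℕ) + 1) ⊆ s.image Fin.val := by
      intro m hm
      simp only [Finset.mem_range] at hm
      have hmn : m < n := by omega
      refine Finset.mem_image.2 ⟨⟨m, hmn⟩, ?_, rfl⟩
      refine Finset.mem_filter.2 ⟨Finset.mem_univ _, ?_⟩
      have : γ ⟨m, hmn⟩ ≤ γ i := hγ.monotone (by rw [Fin.le_def]; simpa using Nat.lt_succ_iff.1 hm)
      exact lt_of_le_of_lt this hxi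
    have : (i : ℕ) + 1 ≤ s.card := by
      calc (i : ℕ) + 1 = (Finset.range ((i : ℕ) + 1)).card := (Finset.card_range _).symm
        _ ≤ (s.image Fin.val).card := Finset.card_le_card hsub
        _ = s.card := Finset.card_image_of_injective _ Fin.val_injective
    simp only at hi
    omega

variable (α μ) in
/-- The root of `g = y` in the interval `I γ k`. -/
noncomputable def rt (hγ : StrictMono γ) (hμ : ∀ i, μ i < 0) (k : Fin (n + 1)) (y : ℝ) : ℝ :=
  (exists_root (α := α) (μ := μ) hγ hμ k y).choose

variable {hγ : StrictMono γ} {hμ : ∀ i, μ i < 0}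

lemma rt_mem (k : Fin (n + 1)) (y : ℝ) : rt α μ hγ hμ k y ∈ I γ k :=
  (exists_root (α := α) (μ := μ) hγ hμ k y).choose_spec.1

lemma g_rt (k : Fin (n + 1)) (y : ℝ) : g α γ μ (rt α μ hγ hμ k y) = y :=
  (exists_root (α := α) (μ := μ) hγ hμ k y).choose_spec.2

lemma sum_rt (y : ℝ) : ∑ k : Fin (n + 1), rt α μ hγ hμ k y = y - α + ∑ i, γ i := by
  classical
  set Q : ℝ[X] := ∏ i, (Polynomial.X - C (γ i)) with hQdef
  set S : ℝ[X] := ∑ i, C (μ i) * ∏ j ∈ Finset.univ.erase i, (Polynomial.X - C (γ j)) with hSdef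
  set F : ℝ[X] := (Polynomial.X + C (α - y)) * Q with hFdef
  set P : ℝ[X] := F + S with hPdef
  have hQm : Q.Monic := monic_prod_of_monic _ _ fun i _ => monic_X_sub_C _
  have hQdeg : Q.natDegree = n := by
    rw [hQdef, natDegree_prod_of_monic _ _ fun i _ => monic_X_sub_C _]
    simp [natDegree_X_sub_C]
  have hFm : F.Monic := (monic_X_add_C _).mul hQm
  have hFnat : F.natDegree = n + 1 := by
    rw [hFdef, Monic.natDegree_mul (monic_X_add_C _) hQm, natDegree_X_add_C, hQdeg, add_comm]
  have hFdeg : F.degree = ((n + 1 : ℕ) : WithBot ℕ) := by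
    rw [degree_eq_natDegree hFm.ne_zero, hFnat]
  have hSdeg : S.degree < ((n : ℕ) : WithBot ℕ) := by
    rw [hSdef]
    refine lt_of_le_of_lt (degree_sum_le _ _) ?_
    rw [Finset.sup_lt_iff (by exact WithBot.bot_lt_coe n)]
    intro i _
    refine lt_of_le_of_lt (degree_mul_le _ _) ?_
    have hRm : (∏ j ∈ Finset.univ.erase i, (Polynomial.X - C (γ j))).Monic :=
      monic_prod_of_monic _ _ fun j _ => monic_X_sub_C _
    have hRdeg : (∏ j ∈ Finset.univ.erase i, (Polynomial.X - C (γ j))).natDegree = n - 1 := by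
      rw [natDegree_prod_of_monic _ _ fun j _ => monic_X_sub_C _]
      simp [natDegree_X_sub_C, Finset.card_erase_of_mem]
    have h1 : (∏ j ∈ Finset.univ.erase i, (Polynomial.X - C (γ j))).degree
        ≤ ((n - 1 : ℕ) : WithBot ℕ) := by
      rw [← hRdeg]
      exact degree_le_natDegree
    calc degree (C (μ i)) + degree (∏ j ∈ Finset.univ.erase i, (Polynomial.X - C (γ j)))
        ≤ 0 + ((n - 1 : ℕ) : WithBot ℕ) := add_le_add degree_C_le h1
      _ = ((n - 1 : ℕ) : WithBot ℕ) := zero_add _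
      _ < ((n : ℕ) : WithBot ℕ) := by
          exact_mod_cast (show n - 1 < n by have := i.isLt; omega)
  have hSF : S.degree < F.degree := by
    rw [hFdeg]
    exact hSdeg.trans (by exact_mod_cast Nat.lt_succ_self n)
  have hPm : P.Monic := hFm.add_of_left hSF
  have hPdeg : P.degree = ((n + 1 : ℕ) : WithBot ℕ) := by
    rw [hPdef, degree_add_eq_left_of_degree_lt hSF, hFdeg]
  have hPnat : P.natDegree = n + 1 := natDegree_eq_of_degree_eq_some hPdeg
  have heval : ∀ x : ℝ, (∀ i, x ≠ γ i) →
      P.eval x = (g α γ μ x - y) * ∏ i, (x - γ i) := by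
    intro x hx
    have hne : ∀ i, x - γ i ≠ 0 := fun i => sub_ne_zero.2 (hx i)
    have hterm : ∀ i : Fin n, μ i * ∏ j ∈ Finset.univ.erase i, (x - γ j)
        = (μ i / (x - γ i)) * ∏ j, (x - γ j) := by
      intro i
      rw [← Finset.mul_prod_erase _ _ (Finset.mem_univ i)]
      rw [mul_comm (x - γ i), ← mul_assoc, mul_right_comm, div_mul_cancel₀ _ (hne i)]
    simp only [hPdef, hFdef, hSdef, hQdef, eval_add, eval_mul, eval_prod, eval_finset_sum,
      eval_sub, eval_X, eval_C, g]
    rw [Finset.sum_congr rfl (fun i _ => hterm i), ← Finset.sum_mul]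
    ring
  have hroot : ∀ k : Fin (n + 1), P.IsRoot (rt α μ hγ hμ k y) := by
    intro k
    have hmem : rt α μ hγ hμ k y ∈ I γ k := rt_mem k y
    have := heval (rt α μ hγ hμ k y) (fun i => ne_pole_of_mem_I hmem i)
    rw [IsRoot, this, g_rt]
    ring
  have hinj : Function.Injective fun k : Fin (n + 1) => rt α μ hγ hμ k y := by
    intro k k' h
    simp only [] at h
    have h1 : rt α μ hγ hμ k y ∈ I γ k := rt_mem k y
    have h2 : rt α μ hγ hμ k' y ∈ I γ k' := rt_mem k' y
    rw [h] at h1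
    exact I_disjoint h1 h2
  set M : Multiset ℝ := Multiset.map (fun k : Fin (n + 1) => rt α μ hγ hμ k y)
    Finset.univ.val with hMdef
  have hMnodup : M.Nodup := Multiset.Nodup.map hinj Finset.univ.nodup
  have hMcard : Multiset.card M = n + 1 := by simp [hMdef]
  have hMle : M ≤ P.roots := by
    rw [Multiset.le_iff_count]
    intro r
    by_cases hr : r ∈ M
    · rw [Multiset.count_eq_one_of_mem hMnodup hr, count_roots]
      obtain ⟨k, _, rfl⟩ := Multiset.mem_map.1 hr
      exact (rootMultiplicity_pos hPm.ne_zero).2 (hroot k)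
    · rw [Multiset.count_eq_zero_of_notMem hr]
      exact Nat.zero_le _
  have hM : M = P.roots := by
    refine Multiset.eq_of_le_of_card_le hMle ?_
    rw [hMcard]
    exact (card_roots' P).trans_eq hPnat
  have hsplits : Splits P := splits_iff_card_roots.2 (by rw [← hM, hMcard, hPnat])
  have hsum := hsplits.nextCoeff_eq_neg_sum_roots_of_monic hPm
  have hnext : P.nextCoeff = α - y - ∑ i, γ i := by
    have h1 : P.nextCoeff = P.coeff n := by
      rw [nextCoeff_of_natDegree_pos (by omega), hPnat]
      norm_num
    have h2 : P.coeff n = F.coeff n + S.coeff n := by rw [hPdef, coeff_add]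
    have h3 : S.coeff n = 0 := coeff_eq_zero_of_degree_lt hSdeg
    have h4 : F.coeff n = F.nextCoeff := by
      rw [nextCoeff_of_natDegree_pos (by omega), hFnat]
      norm_num
    have h5 : F.nextCoeff = (α - y) + -(∑ i, γ i) := by
      rw [hFdef, Monic.nextCoeff_mul (monic_X_add_C _) hQm, nextCoeff_X_add_C, hQdef,
        prod_X_sub_C_nextCoeff]
    rw [h1, h2, h3, h4, h5]
    ring
  have hMsum : M.sum = ∑ k : Fin (n + 1), rt α μ hγ hμ k y := rfl
  have : P.roots.sum = ∑ k : Fin (n + 1), rt α μ hγ hμ k y := by rw [← hM, hMsum]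
  linarith [hsum, hnext, this]

lemma rt_lt_rt (hab : a < b) (k : Fin (n + 1)) : rt α μ hγ hμ k a < rt α μ hγ hμ k b := by
  by_contra h
  push_neg at h
  have h1 : rt α μ hγ hμ k b ∈ I γ k := rt_mem k b
  have h2 : rt α μ hγ hμ k a ∈ I γ k := rt_mem k a
  have := (g_strictMonoOn (α := α) hμ).monotoneOn h1 h2 h
  rw [g_rt, g_rt] at this
  linarith

lemma I_inter_preimage (hab : a < b) (k : Fin (n + 1)) :
    {x | x ∈ I γ k ∧ g α γ μ x ∈ Set.Ioo a b}
      = Set.Ioo (rt α μ hγ hμ k a) (rt α μ hγ hμ k b) := by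
  have hma : rt α μ hγ hμ k a ∈ I γ k := rt_mem k a
  have hmb : rt α μ hγ hμ k b ∈ I γ k := rt_mem k b
  ext x
  constructor
  · rintro ⟨hxI, hga, hgb⟩
    constructor
    · by_contra h
      push_neg at h
      have := (g_strictMonoOn (α := α) hμ).monotoneOn hxI hma h
      rw [g_rt] at this
      linarith
    · by_contra h
      push_neg at h
      have := (g_strictMonoOn (α := α) hμ).monotoneOn hmb hxI h
      rw [g_rt] at this
      linarith
  · rintro ⟨h1, h2⟩
    have hxI : x ∈ I γ k := mem_I_of_between hma hmb h1.le h2.le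
    refine ⟨hxI, ?_, ?_⟩
    · have := g_strictMonoOn (α := α) hμ hma hxI h1
      rwa [g_rt] at this
    · have := g_strictMonoOn (α := α) hμ hxI hmb h2
      rwa [g_rt] at this

omit hγ hμ in
lemma key_measure (hsm : StrictMono γ) (hneg : ∀ i, μ i < 0) (hab : a < b) :
    volume {x : ℝ | (∀ i, x ≠ γ i) ∧ g α γ μ x ∈ Set.Ioo a b} = ENNReal.ofReal (b - a) := by
  have hUnion : {x : ℝ | (∀ i, x ≠ γ i) ∧ g α γ μ x ∈ Set.Ioo a b}
      = ⋃ k : Fin (n + 1), Set.Ioo (rt α μ hsm hneg k a) (rt α μ hsm hneg k b) := by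
    ext x
    simp only [Set.mem_iUnion, Set.mem_setOf_eq]
    constructor
    · rintro ⟨hpole, hg⟩
      obtain ⟨k, hk⟩ := exists_mem_I hsm hpole
      refine ⟨k, ?_⟩
      rw [← I_inter_preimage (hγ := hsm) (hμ := hneg) hab k]
      exact ⟨hk, hg⟩
    · rintro ⟨k, hk⟩
      rw [← I_inter_preimage (hγ := hsm) (hμ := hneg) hab k] at hk
      exact ⟨fun i => ne_pole_of_mem_I hk.1 i, hk.2⟩
  rw [hUnion]
  have hdisj : Pairwise (Function.onFun Disjoint fun k : Fin (n + 1) =>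
      Set.Ioo (rt α μ hsm hneg k a) (rt α μ hsm hneg k b)) := by
    intro k k' hkk'
    refine Set.disjoint_left.2 fun x hx hx' => hkk' ?_
    have hxk : x ∈ {x | x ∈ I γ k ∧ g α γ μ x ∈ Set.Ioo a b} := by
      rw [I_inter_preimage (hγ := hsm) (hμ := hneg) hab k]
      exact hx
    have hxk' : x ∈ {x | x ∈ I γ k' ∧ g α γ μ x ∈ Set.Ioo a b} := by
      rw [I_inter_preimage (hγ := hsm) (hμ := hneg) hab k']
      exact hx'
    exact I_disjoint hxk.1 hxk'.1
  rw [measure_iUnion hdisj fun k => measurableSet_Ioo, tsum_fintype]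
  rw [Finset.sum_congr rfl fun (k : Fin (n + 1)) _ => Real.volume_Ioo
    (a := rt α μ hsm hneg k a) (b := rt α μ hsm hneg k b)]
  rw [← ENNReal.ofReal_sum_of_nonneg (fun k _ => sub_nonneg.2 (rt_lt_rt hab k).le)]
  congr 1
  rw [Finset.sum_sub_distrib, sum_rt, sum_rt]
  ring

omit hγ hμ in
lemma map_eq_volume (hinj : Function.Injective γ) (hneg : ∀ i, μ i < 0)
    (ε : ℝ) (hε : ε = 1 ∨ ε = -1) :
    Measure.map (fun x : ℝ => ε * (x + α + ∑ i, μ i / (x - γ i))) volume = volume := by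
  classical
  set σ := Tuple.sort γ with hσ
  set δ : Fin n → ℝ := γ ∘ σ with hδ
  have hsm : StrictMono δ :=
    (Tuple.monotone_sort γ).strictMono_of_injective (hinj.comp σ.injective)
  set ν : Fin n → ℝ := μ ∘ σ with hν
  have hν0 : ∀ i, ν i < 0 := fun i => hneg _
  have hfun : (fun x : ℝ => ε * (x + α + ∑ i, μ i / (x - γ i)))
      = fun x => ε * g α δ ν x := by
    funext x
    rw [g]
    congr 2
    exact (Equiv.sum_comp σ fun i => μ i / (x - γ i)).symm
  rw [hfun]
  have hmeas : Measurable fun x : ℝ => ε * g α δ ν x := by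
    apply Measurable.const_mul
    apply Measurable.add (measurable_id.add measurable_const)
    exact Finset.measurable_sum _ fun i _ =>
      measurable_const.div (measurable_id.sub measurable_const)
  have hps : volume {x : ℝ | ¬ ∀ i, x ≠ δ i} = 0 := by
    have hsub : {x : ℝ | ¬ ∀ i, x ≠ δ i} ⊆ ⋃ i, {δ i} := by
      intro x hx
      push_neg at hx
      obtain ⟨i, hi⟩ := hx
      exact Set.mem_iUnion.2 ⟨i, hi⟩
    exact measure_mono_null hsub (measure_iUnion_null fun i => measure_singleton _)
  have habs : ∀ a' b' : ℝ, a' < b' →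
      volume {x : ℝ | g α δ ν x ∈ Set.Ioo a' b'} = ENNReal.ofReal (b' - a') := by
    intro a' b' h
    have hk := key_measure (α := α) hsm hν0 h
    refine le_antisymm ?_ ?_
    · calc volume {x : ℝ | g α δ ν x ∈ Set.Ioo a' b'}
          ≤ volume ({x : ℝ | (∀ i, x ≠ δ i) ∧ g α δ ν x ∈ Set.Ioo a' b'}
              ∪ {x : ℝ | ¬ ∀ i, x ≠ δ i}) := by
            apply measure_mono
            intro x hx
            by_cases hp : ∀ i, x ≠ δ i
            · exact Or.inl ⟨hp, hx⟩
            · exact Or.inr hp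
        _ ≤ volume {x : ℝ | (∀ i, x ≠ δ i) ∧ g α δ ν x ∈ Set.Ioo a' b'}
              + volume {x : ℝ | ¬ ∀ i, x ≠ δ i} := measure_union_le _ _
        _ = ENNReal.ofReal (b' - a') := by rw [hk, hps, add_zero]
    · rw [← hk]
      exact measure_mono fun x hx => hx.2
  have hIoo : ∀ a b : ℝ, volume ((fun x => ε * g α δ ν x) ⁻¹' Set.Ioo a b)
      = volume (Set.Ioo a b) := by
    intro a b
    rcases le_or_gt b a with hba | hab
    · rw [Set.Ioo_eq_empty (not_lt.2 hba)]
      simp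
    · rw [Real.volume_Ioo]
      rcases hε with rfl | rfl
      · have hset : (fun x => (1:ℝ) * g α δ ν x) ⁻¹' Set.Ioo a b
            = {x : ℝ | g α δ ν x ∈ Set.Ioo a b} := by
          ext x
          simp [Set.mem_preimage]
        rw [hset, habs a b hab]
      · have hset : (fun x => (-1:ℝ) * g α δ ν x) ⁻¹' Set.Ioo a b
            = {x : ℝ | g α δ ν x ∈ Set.Ioo (-b) (-a)} := by
          ext x
          simp only [Set.mem_preimage, Set.mem_Ioo, Set.mem_setOf_eq, neg_one_mul]
          constructor
          · rintro ⟨h1, h2⟩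
            exact ⟨by linarith, by linarith⟩
          · rintro ⟨h1, h2⟩
            exact ⟨by linarith, by linarith⟩
        rw [hset, habs _ _ (by linarith)]
        congr 1
        ring
  haveI : IsLocallyFiniteMeasure (Measure.map (fun x => ε * g α δ ν x) volume) := by
    constructor
    intro x
    refine ⟨Set.Ioo (x - 1) (x + 1), Ioo_mem_nhds (by linarith) (by linarith), ?_⟩
    rw [Measure.map_apply hmeas measurableSet_Ioo, hIoo]
    exact measure_Ioo_lt_top
  refine Real.measure_ext_Ioo_rat fun p q => ?_
  rw [Measure.map_apply hmeas measurableSet_Ioo, hIoo]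

end PolyaSzegoAux

open PolyaSzegoAux in
/-- A map `r(x) = ±(x + α + ∑ μᵢ/(x - γᵢ))` with distinct real `γᵢ` and
`μᵢ < 0` induces an isometric composition operator `f ↦ f ∘ r` on `L^p(ℝ)`
for every `1 ≤ p < ∞`: if `f ∈ L^p(ℝ)` then `f ∘ r ∈ L^p(ℝ)` with the same
`L^p`-norm. -/
theorem polyaSzego_comp_isometry_Lp
    (ε : ℝ) (hε : ε = 1 ∨ ε = -1) (α : ℝ) (n : ℕ)
    (γ : Fin n → ℝ) (hγ : Function.Injective γ)
    (μ : Fin n → ℝ) (hμ : ∀ i, μ i < 0)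
    (r : ℝ → ℝ) (hr : ∀ x : ℝ, (∀ i, x ≠ γ i) →
      r x = ε * (x + α + ∑ i, μ i / (x - γ i))) :
    ∀ p : ℝ≥0∞, 1 ≤ p → p ≠ ⊤ → ∀ f : ℝ → ℂ, MemLp f p volume →
      MemLp (f ∘ r) p volume ∧ eLpNorm (f ∘ r) p volume = eLpNorm f p volume := by
  intro p _hp _hptop f hf
  set T : ℝ → ℝ := fun x => ε * (x + α + ∑ i, μ i / (x - γ i)) with hT
  have hmeas : Measurable T := by
    apply Measurable.const_mul
    apply Measurable.add (measurable_id.add measurable_const)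
    exact Finset.measurable_sum _ fun i _ =>
      measurable_const.div (measurable_id.sub measurable_const)
  have hmp : MeasurePreserving T volume volume :=
    ⟨hmeas, map_eq_volume (α := α) hγ hμ ε hε⟩
  have hnull : volume {x : ℝ | ¬ ∀ i, x ≠ γ i} = 0 := by
    have hsub : {x : ℝ | ¬ ∀ i, x ≠ γ i} ⊆ ⋃ i, {γ i} := by
      intro x hx
      push_neg at hx
      obtain ⟨i, hi⟩ := hx
      exact Set.mem_iUnion.2 ⟨i, hi⟩
    exact measure_mono_null hsub (measure_iUnion_null fun i => measure_singleton _)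
  have hae : f ∘ r =ᵐ[volume] f ∘ T := by
    rw [Filter.EventuallyEq, ae_iff]
    refine measure_mono_null ?_ hnull
    intro x hx
    simp only [Set.mem_setOf_eq] at hx ⊢
    intro hall
    exact hx (by simp only [Function.comp_apply, hr x hall, hT])
  constructor
  · exact (hf.comp_measurePreserving hmp).ae_eq hae.symm
  · rw [eLpNorm_congr_ae hae]
    exact eLpNorm_comp_measurePreserving hf.aestronglyMeasurable hmp
end

section
/- Let a be a point of the unit circle 𝕋 = {z ∈ ℂ : |z| = 1}, let Ω ⊆ ℂ be an open set containing the closed unit disc with the point a removed (i.e., {z : |z| ≤ 1} ∖ {a} ⊆ Ω), and let φ be analytic on Ω with φ(𝔻) ⊆ 𝔻, where 𝔻 = {z : |z| < 1}. Then the set K_φ = {z ∈ 𝕋 ∖ {a} : |φ(z)| = 1} has normalized Lebesgue arc-length measure m(K_φ) equal to either 0 or 1. -/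
open MeasureTheory

/-- Normalized Lebesgue arc-length measure of a subset of the unit circle
`𝕋 ⊆ ℂ`, computed by pulling back to the parametrization `θ ↦ exp(iθ)`,
`θ ∈ [0, 2π)`, and dividing by `2π` (so that the whole circle has measure 1). -/
noncomputable def circleMeasure (E : Set ℂ) : ENNReal :=
  volume {θ : ℝ | θ ∈ Set.Ico (0 : ℝ) (2 * Real.pi) ∧
    Complex.exp (θ * Complex.I) ∈ E} / ENNReal.ofReal (2 * Real.pi)


/-- If two angles give the same point on the circle, they differ by a multiple of `2π`. -/
lemma exp_mul_I_eq_iff {θ θ' : ℝ} (h : Complex.exp (θ * Complex.I) = Complex.exp (θ' * Complex.I)) :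
    ∃ n : ℤ, θ = θ' + n * (2 * Real.pi) := by
  obtain ⟨n, hn⟩ := Complex.exp_eq_exp_iff_exists_int.mp h
  refine ⟨n, ?_⟩
  have := congrArg Complex.im hn
  simpa [Complex.mul_im, Complex.add_im] using this

/-- Dichotomy for real-analytic functions on an interval: either `f ≡ 1` or its
`1`-level set is null. -/
lemma analytic_level_dichotomy {f : ℝ → ℝ} {c d : ℝ}
    (hf : ∀ x ∈ Set.Ioo c d, AnalyticAt ℝ f x) :
    Set.EqOn f (fun _ => (1:ℝ)) (Set.Ioo c d) ∨
      volume {x | x ∈ Set.Ioo c d ∧ f x = 1} = 0 := by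
  set S : Set ℝ := {x | x ∈ Set.Ioo c d ∧ f x = 1} with hS
  by_cases hv : volume S = 0
  · exact Or.inr hv
  · left
    -- find an accumulation point of S
    have hacc : ∃ x ∈ Set.Ioo c d, ∃ᶠ y in nhdsWithin x {x}ᶜ, y ∈ S := by
      by_contra hno
      push_neg at hno
      have hdisc : DiscreteTopology S := by
        rw [discreteTopology_subtype_iff]
        intro x hx
        rw [Filter.inf_principal_eq_bot]
        exact hno x hx.1
      have hcnt : S.Countable :=
        (HereditarilyLindelof_LindelofSets S).countable hdisc
      exact hv (hcnt.measure_zero _)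
    obtain ⟨x, hxJ, hxf⟩ := hacc
    exact AnalyticOnNhd.eqOn_of_preconnected_of_frequently_eq hf analyticOnNhd_const
      isPreconnected_Ioo hxJ (hxf.mono fun y hy => hy.2)

/-- Let `a ∈ 𝕋`, let `Ω ⊆ ℂ` be an open set containing the closed unit disc
with the point `a` removed, and let `φ` be analytic on `Ω` with
`φ(𝔻) ⊆ 𝔻`. Then the set `K_φ = {z ∈ 𝕋 ∖ {a} : |φ(z)| = 1}` has normalized
arc-length measure `0` or `1`. (Lemma 3.3 of the paper.) -/
theorem measure_eq_one_inner_or_zero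
    (a : ℂ) (ha : ‖a‖ = 1)
    (Ω : Set ℂ) (hΩ : IsOpen Ω)
    (hΩsub : Metric.closedBall (0 : ℂ) 1 \ {a} ⊆ Ω)
    (φ : ℂ → ℂ) (hφ : DifferentiableOn ℂ φ Ω)
    (hmap : Set.MapsTo φ (Metric.ball (0 : ℂ) 1) (Metric.ball (0 : ℂ) 1)) :
    circleMeasure {z : ℂ | ‖z‖ = 1 ∧ z ≠ a ∧ ‖φ z‖ = 1} = 0 ∨
    circleMeasure {z : ℂ | ‖z‖ = 1 ∧ z ≠ a ∧ ‖φ z‖ = 1} = 1 := by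
  have hπ : (0:ℝ) < Real.pi := Real.pi_pos
  -- angle of a
  set θa : ℝ := if Complex.arg a < 0 then Complex.arg a + 2 * Real.pi else Complex.arg a with hθa
  have hθa0 : 0 ≤ θa := by
    rcases lt_or_ge (Complex.arg a) 0 with h | h
    · simp only [hθa, if_pos h]
      nlinarith [Complex.neg_pi_lt_arg a]
    · simp only [hθa, if_neg (not_lt.mpr h)]; exact h
  have hθa2 : θa < 2 * Real.pi := by
    rcases lt_or_ge (Complex.arg a) 0 with h | h
    · simp only [hθa, if_pos h]; nlinarith
    · simp only [hθa, if_neg (not_lt.mpr h)]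
      nlinarith [Complex.arg_le_pi a]
  have hexpθa : Complex.exp (θa * Complex.I) = a := by
    have hbase : Complex.exp (Complex.arg a * Complex.I) = a := by
      have := Complex.norm_mul_exp_arg_mul_I a
      rwa [ha, Complex.ofReal_one, one_mul] at this
    rcases lt_or_ge (Complex.arg a) 0 with h | h
    · simp only [hθa, if_pos h]
      rw [Complex.ofReal_add, add_mul, Complex.exp_add, hbase]
      have : Complex.exp ((2 * Real.pi : ℝ) * Complex.I) = 1 := by
        push_cast
        exact Complex.exp_two_pi_mul_I
      rw [this, mul_one]
    · simp only [hθa, if_neg (not_lt.mpr h)]; exact hbase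
  -- the analytic function
  set f : ℝ → ℝ := fun θ => Complex.normSq (φ (Complex.exp (θ * Complex.I))) with hf
  set J : Set ℝ := Set.Ioo θa (θa + 2 * Real.pi) with hJ
  -- points of J map into Ω
  have hmem : ∀ θ ∈ J, Complex.exp (θ * Complex.I) ∈ Ω := by
    intro θ hθ
    apply hΩsub
    constructor
    · rw [Metric.mem_closedBall, dist_zero_right,
        Complex.norm_exp_ofReal_mul_I]
    · simp only [Set.mem_singleton_iff]
      intro hcontra
      rw [← hexpθa] at hcontra
      obtain ⟨n, hn⟩ := exp_mul_I_eq_iff hcontra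
      have h1 : (0:ℝ) < n * (2 * Real.pi) := by nlinarith [hθ.1, hθ.2]
      have h2 : (n:ℝ) * (2 * Real.pi) < 2 * Real.pi := by nlinarith [hθ.1, hθ.2]
      have hn0 : (0:ℝ) < n := by nlinarith
      have hn1 : (n:ℝ) < 1 := by nlinarith
      have : (0:ℤ) < n := by exact_mod_cast hn0
      have : (n:ℤ) < 1 := by exact_mod_cast hn1
      omega
  have hφa : AnalyticOnNhd ℂ φ Ω := hφ.analyticOnNhd hΩ
  -- analyticity of f on J
  have hfa : ∀ θ ∈ J, AnalyticAt ℝ f θ := by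
    intro θ hθ
    have h1 : AnalyticAt ℝ (fun θ : ℝ => (θ : ℂ) * Complex.I) θ :=
      (Complex.ofRealCLM.analyticAt θ).mul analyticAt_const
    have h2 : AnalyticAt ℝ (fun θ : ℝ => Complex.exp ((θ : ℂ) * Complex.I)) θ :=
      (analyticAt_cexp.restrictScalars).comp h1
    have h3 : AnalyticAt ℝ (φ ∘ fun θ : ℝ => Complex.exp ((θ : ℂ) * Complex.I)) θ :=
      AnalyticAt.comp ((hφa _ (hmem θ hθ)).restrictScalars) h2
    have h3' : AnalyticAt ℝ (fun θ : ℝ => φ (Complex.exp ((θ : ℂ) * Complex.I))) θ := h3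
    have h4 : AnalyticAt ℝ (fun θ : ℝ =>
        (φ (Complex.exp ((θ : ℂ) * Complex.I))).re) θ :=
      AnalyticAt.comp (f := fun θ : ℝ => φ (Complex.exp ((θ : ℂ) * Complex.I)))
        (Complex.reCLM.analyticAt _) h3'
    have h5 : AnalyticAt ℝ (fun θ : ℝ =>
        (φ (Complex.exp ((θ : ℂ) * Complex.I))).im) θ :=
      AnalyticAt.comp (f := fun θ : ℝ => φ (Complex.exp ((θ : ℂ) * Complex.I)))
        (Complex.imCLM.analyticAt _) h3'
    have : AnalyticAt ℝ (fun θ : ℝ =>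
        (φ (Complex.exp ((θ : ℂ) * Complex.I))).re * (φ (Complex.exp ((θ : ℂ) * Complex.I))).re
        + (φ (Complex.exp ((θ : ℂ) * Complex.I))).im
          * (φ (Complex.exp ((θ : ℂ) * Complex.I))).im) θ :=
      (h4.mul h4).add (h5.mul h5)
    have hfrw : f = fun θ : ℝ =>
        (φ (Complex.exp ((θ : ℂ) * Complex.I))).re * (φ (Complex.exp ((θ : ℂ) * Complex.I))).re
        + (φ (Complex.exp ((θ : ℂ) * Complex.I))).im
          * (φ (Complex.exp ((θ : ℂ) * Complex.I))).im := by
      funext θ'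
      simp only [hf, Complex.normSq_apply]
    rw [hfrw]
    exact this
  -- exp is 2π periodic
  have hper : ∀ θ : ℝ, Complex.exp (((θ + 2 * Real.pi : ℝ)) * Complex.I)
      = Complex.exp (θ * Complex.I) := by
    intro θ
    rw [Complex.ofReal_add, add_mul, Complex.exp_add]
    have : Complex.exp ((2 * Real.pi : ℝ) * Complex.I) = 1 := by
      push_cast; exact Complex.exp_two_pi_mul_I
    rw [this, mul_one]
  set K : Set ℂ := {z : ℂ | ‖z‖ = 1 ∧ z ≠ a ∧ ‖φ z‖ = 1} with hK
  set T : Set ℝ := {θ : ℝ | θ ∈ Set.Ico (0 : ℝ) (2 * Real.pi) ∧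
      Complex.exp (θ * Complex.I) ∈ K} with hT
  have hTdef : circleMeasure K = volume T / ENNReal.ofReal (2 * Real.pi) := rfl
  rcases analytic_level_dichotomy hfa with heq | hnull
  · -- f ≡ 1 on J : measure 1
    right
    have hsub : Set.Ico (0:ℝ) (2 * Real.pi) \ {θa} ⊆ T := by
      rintro θ ⟨hθI, hθne⟩
      simp only [Set.mem_singleton_iff] at hθne
      refine ⟨hθI, ?_, ?_, ?_⟩
      · exact Complex.norm_exp_ofReal_mul_I θ
      · intro hcontra
        rw [← hexpθa] at hcontra
        obtain ⟨n, hn⟩ := exp_mul_I_eq_iff hcontra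
        have hb1 : -(2 * Real.pi) < (n:ℝ) * (2 * Real.pi) := by
          nlinarith [hθI.1, hθI.2]
        have hb2 : (n:ℝ) * (2 * Real.pi) < 2 * Real.pi := by
          nlinarith [hθI.1, hθI.2]
        have : -(1:ℝ) < n := by nlinarith
        have : (n:ℝ) < 1 := by nlinarith
        have h1 : (-1:ℤ) < n := by exact_mod_cast ‹-(1:ℝ) < (n:ℝ)›
        have h2 : (n:ℤ) < 1 := by exact_mod_cast ‹(n:ℝ) < 1›
        have : n = 0 := by omega
        rw [this] at hn
        simp at hn
        exact hθne (by linarith [hn])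
      · -- |φ(exp θ I)| = 1
        have hval : f θ = 1 := by
          rcases lt_or_ge θa θ with h | h
          · exact heq ⟨h, by nlinarith [hθI.2]⟩
          · have hlt : θ < θa := lt_of_le_of_ne h hθne
            have hmem' : θ + 2 * Real.pi ∈ J :=
              ⟨by nlinarith [hθI.1], by nlinarith⟩
            have h1 := heq hmem'
            simp only [hf] at h1 ⊢
            rw [hper θ] at h1
            exact h1
        simp only [hf, Complex.normSq_eq_norm_sq] at hval
        nlinarith [norm_nonneg (φ (Complex.exp (θ * Complex.I)))]
    have hsub2 : T ⊆ Set.Ico (0:ℝ) (2 * Real.pi) := fun θ hθ => hθ.1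
    have hvol : volume T = ENNReal.ofReal (2 * Real.pi) := by
      apply le_antisymm
      · calc volume T ≤ volume (Set.Ico (0:ℝ) (2 * Real.pi)) := measure_mono hsub2
          _ = ENNReal.ofReal (2 * Real.pi) := by rw [Real.volume_Ico, sub_zero]
      · calc ENNReal.ofReal (2 * Real.pi)
            = volume (Set.Ico (0:ℝ) (2 * Real.pi)) := by rw [Real.volume_Ico, sub_zero]
          _ = volume (Set.Ico (0:ℝ) (2 * Real.pi) \ {θa}) :=
              (measure_diff_null (measure_singleton θa)).symm
          _ ≤ volume T := measure_mono hsub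
    rw [hTdef, hvol]
    exact ENNReal.div_self (by positivity) ENNReal.ofReal_ne_top
  · -- level set null : measure 0
    left
    set S : Set ℝ := {x | x ∈ J ∧ f x = 1} with hSdef
    have hTsub : T ⊆ S ∪ (fun θ => θ + 2 * Real.pi) ⁻¹' S := by
      rintro θ ⟨hθI, habs, hne, hφ1⟩
      have hfθ : f θ = 1 := by
        simp only [hf, Complex.normSq_eq_norm_sq, hφ1]; norm_num
      have hθne : θ ≠ θa := by
        intro h; apply hne; rw [h, hexpθa]
      rcases lt_or_ge θa θ with h | h
      · left
        exact ⟨⟨h, by nlinarith [hθI.2]⟩, hfθ⟩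
      · right
        have hlt : θ < θa := lt_of_le_of_ne h hθne
        have hmemS : θ + 2 * Real.pi ∈ S := by
          refine ⟨⟨by nlinarith [hθI.1], by nlinarith⟩, ?_⟩
          show f (θ + 2 * Real.pi) = 1
          simp only [hf, hper θ]
          exact hfθ
        exact hmemS
    have hvol : volume T = 0 := by
      apply measure_mono_null hTsub
      apply measure_union_null hnull
      rw [show (fun θ : ℝ => θ + 2 * Real.pi) = (fun θ : ℝ => θ + 2 * Real.pi) from rfl]
      rw [measure_preimage_add_right volume (2 * Real.pi) S]
      exact hnull
    rw [hTdef, hvol, ENNReal.zero_div]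
end

section
/- Let γ ∈ ℝ, let n ≥ 2 be a natural number, let μ be a nonzero real number, let g be analytic on an open neighborhood of γ, and define r(z) = μ/(z − γ)ⁿ + g(z) on a punctured neighborhood of γ. Then r does not map the intersection of the upper half-plane with any punctured neighborhood of γ into the upper half-plane: for every ε > 0 there exists z with Im z > 0 and |z − γ| < ε such that Im r(z) < 0. -/
open Real

lemma aux_angle (n : ℕ) (hn : 2 ≤ n) (μ : ℝ) (hμ : μ ≠ 0) :
    ∃ θ : ℝ, 0 < θ ∧ θ < π ∧ μ * Real.sin (n * θ) = |μ| := by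
  have hn0 : (0:ℝ) < n := by positivity
  rcases hμ.lt_or_gt with h | h
  · refine ⟨3 * π / (2 * n), by positivity, ?_, ?_⟩
    · rw [div_lt_iff₀ (by positivity)]
      have : (2:ℝ) ≤ n := by exact_mod_cast hn
      nlinarith [Real.pi_pos]
    · have : (n : ℝ) * (3 * π / (2 * n)) = π + π / 2 := by
        field_simp; ring
      rw [this, Real.sin_add]
      simp [abs_of_neg h]
  · refine ⟨π / (2 * n), by positivity, ?_, ?_⟩
    · rw [div_lt_iff₀ (by positivity)]
      have : (2:ℝ) ≤ n := by exact_mod_cast hn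
      nlinarith [Real.pi_pos]
    · have : (n : ℝ) * (π / (2 * n)) = π / 2 := by
        field_simp
      rw [this, Real.sin_pi_div_two]
      simp [abs_of_pos h]

/-- A function with a repeated real pole cannot map the upper half-plane near
the pole into the upper half-plane: if `r(z) = μ/(z-γ)ⁿ + g(z)` with `γ ∈ ℝ`,
`n ≥ 2`, `μ ∈ ℝ`, `μ ≠ 0`, and `g` analytic on an open neighborhood of `γ`,
then arbitrarily close to `γ` there are points `z` of the upper half-plane with
`Im r(z) < 0`. -/
theorem repeated_real_pole_not_halfplane_selfmap
    (γ : ℝ) (n : ℕ) (hn : 2 ≤ n) (μ : ℝ) (hμ : μ ≠ 0)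
    (g : ℂ → ℂ) (V : Set ℂ) (hV : IsOpen V) (hγV : (γ : ℂ) ∈ V)
    (hg : DifferentiableOn ℂ g V)
    (r : ℂ → ℂ) (hr : ∀ z : ℂ, z ≠ (γ : ℂ) → r z = (μ : ℂ) / (z - γ) ^ n + g z) :
    ∀ ε : ℝ, 0 < ε → ∃ z : ℂ, 0 < z.im ∧ ‖z - γ‖ < ε ∧ (r z).im < 0 := by
  intro ε hε
  obtain ⟨θ, hθ0, hθπ, hsin⟩ := aux_angle n hn μ hμ
  -- continuity of g at γ
  have hgc : ContinuousAt g (γ : ℂ) :=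
    (hg.differentiableAt (hV.mem_nhds hγV)).continuousAt
  obtain ⟨ρ, hρ0, hρ⟩ := Metric.continuousAt_iff.mp hgc 1 one_pos
  set M : ℝ := |(g (γ:ℂ)).im| + 1 with hM
  have hM0 : 0 < M := by positivity
  set δ : ℝ := min (min (ε/2) (ρ/2)) (min 1 (|μ| / (2 * M))) with hδ
  have habs : 0 < |μ| := abs_pos.mpr hμ
  have hδ0 : 0 < δ := by
    apply lt_min (lt_min (by positivity) (by positivity)) (lt_min one_pos (by positivity))
  have hδε : δ < ε := lt_of_le_of_lt ((min_le_left _ _).trans (min_le_left _ _)) (by linarith)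
  have hδρ : δ < ρ := lt_of_le_of_lt ((min_le_left _ _).trans (min_le_right _ _)) (by linarith)
  have hδ1 : δ ≤ 1 := (min_le_right _ _).trans (min_le_left _ _)
  have hδμ : δ ≤ |μ| / (2 * M) := (min_le_right _ _).trans (min_le_right _ _)
  set z : ℂ := (γ : ℂ) + δ * Complex.exp (θ * Complex.I) with hz
  have hzsub : z - γ = (δ : ℂ) * Complex.exp (θ * Complex.I) := by rw [hz]; ring
  have hzne : z ≠ (γ : ℂ) := by
    intro h
    have : (δ : ℂ) * Complex.exp (θ * Complex.I) = 0 := by rw [← hzsub, h, sub_self]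
    rcases mul_eq_zero.mp this with h' | h'
    · exact hδ0.ne' (by exact_mod_cast h')
    · exact Complex.exp_ne_zero _ h'
  have him : 0 < z.im := by
    have : z.im = δ * Real.sin θ := by
      simp [hz, Complex.add_im, Complex.im_ofReal_mul, Complex.exp_ofReal_mul_I_im]
    rw [this]
    exact mul_pos hδ0 (Real.sin_pos_of_pos_of_lt_pi hθ0 hθπ)
  have habsz : ‖z - γ‖ = δ := by
    rw [hzsub]
    simp [Complex.norm_exp_ofReal_mul_I, abs_of_pos hδ0]
  refine ⟨z, him, by rw [habsz]; exact hδε, ?_⟩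
  -- pole term imaginary part
  have hδn : (0:ℝ) < δ ^ n := by positivity
  have hpow : (z - γ) ^ n = ((δ ^ n : ℝ) : ℂ) * Complex.exp ((n * θ : ℝ) * Complex.I) := by
    rw [hzsub, mul_pow, ← Complex.exp_nat_mul]
    push_cast
    ring_nf
  have hpole : ((μ : ℂ) / (z - γ) ^ n).im = -(|μ| / δ ^ n) := by
    rw [hpow]
    have key : (μ : ℂ) / (((δ ^ n : ℝ) : ℂ) * Complex.exp ((n * θ : ℝ) * Complex.I))
        = ((μ / δ ^ n : ℝ) : ℂ) * Complex.exp ((-(n * θ) : ℝ) * Complex.I) := by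
      rw [show ((-(n * θ) : ℝ) : ℂ) * Complex.I = -((n * θ : ℝ) * Complex.I) by push_cast; ring,
        Complex.exp_neg]
      have h1 : ((δ ^ n : ℝ) : ℂ) ≠ 0 := by exact_mod_cast hδn.ne'
      field_simp
      rw [← Complex.ofReal_mul, mul_div_assoc', mul_div_cancel_left₀ _ hδn.ne']
    rw [key, Complex.im_ofReal_mul, Complex.exp_ofReal_mul_I_im, Real.sin_neg]
    field_simp
    nlinarith [hsin]
  -- bound on g
  have hgz : (g z).im ≤ M := by
    have hd : dist z (γ:ℂ) < ρ := by
      rw [Complex.dist_eq, habsz]; exact hδρ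
    have h1 : ‖g z - g (γ:ℂ)‖ < 1 := by
      have := hρ hd; rwa [Complex.dist_eq] at this
    have h2 : (g z).im - (g (γ:ℂ)).im ≤ ‖g z - g (γ:ℂ)‖ := by
      calc (g z).im - (g (γ:ℂ)).im = (g z - g (γ:ℂ)).im := by simp
        _ ≤ |(g z - g (γ:ℂ)).im| := le_abs_self _
        _ ≤ ‖g z - g (γ:ℂ)‖ := Complex.abs_im_le_norm _
    have h3 : (g (γ:ℂ)).im ≤ |(g (γ:ℂ)).im| := le_abs_self _
    rw [hM]; linarith
  rw [hr z hzne, Complex.add_im, hpole]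
  have hMlt : M < |μ| / δ ^ n := by
    rw [lt_div_iff₀ hδn]
    have hδnδ : δ ^ n ≤ δ := pow_le_of_le_one hδ0.le hδ1 (by omega)
    have h2M : δ * (2 * M) ≤ |μ| := (le_div_iff₀ (by positivity)).mp hδμ
    nlinarith
  linarith
end

section
/- Let γ ∈ ℝ, let μ > 0 be a real number, let g be analytic on an open neighborhood of γ, and define r(z) = μ/(z − γ) + g(z) on a punctured neighborhood of γ. Then r does not map the intersection of the upper half-plane with any punctured neighborhood of γ into the upper half-plane: for every ε > 0 there exists z with Im z > 0 and |z − γ| < ε such that Im r(z) < 0. Consequently, if a function analytic on ℂ⁺ mapping ℂ⁺ into ℂ⁺ has a simple pole at a real point γ with real residue μ, then μ < 0. -/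
lemma aux_pole (γ μ : ℝ) (hμ : 0 < μ) (g : ℂ → ℂ) (V : Set ℂ) (hV : IsOpen V)
    (hγV : (γ : ℂ) ∈ V) (hg : DifferentiableOn ℂ g V) (ε : ℝ) (hε : 0 < ε) :
    ∃ z : ℂ, 0 < z.im ∧ ‖z - γ‖ < ε ∧ ((μ : ℂ) / (z - γ) + g z).im < 0 := by
  have hcont : ContinuousAt g γ :=
    (hg.differentiableAt (hV.mem_nhds hγV)).continuousAt
  obtain ⟨δ, hδ, hδ'⟩ := Metric.continuousAt_iff.mp hcont 1 one_pos
  set M : ℝ := |(g γ).im| + 1 with hM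
  have hM0 : 0 < M := by positivity
  set t : ℝ := min ε (min δ (μ / M)) / 2 with ht
  have ht0 : 0 < t := by
    have : 0 < μ / M := by positivity
    positivity
  have htε : t < ε := by
    have : t ≤ ε / 2 := by
      simp only [ht]
      gcongr
      exact min_le_left _ _
    linarith
  have htδ : t < δ := by
    have : t ≤ δ / 2 := by
      simp only [ht]
      gcongr
      exact (min_le_right _ _).trans (min_le_left _ _)
    linarith
  have htM : t < μ / M := by
    have : t ≤ (μ / M) / 2 := by
      simp only [ht]
      gcongr
      exact (min_le_right _ _).trans (min_le_right _ _)
    have : 0 < μ / M := by positivity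
    linarith
  refine ⟨(γ : ℂ) + t * Complex.I, ?_, ?_, ?_⟩
  · simp [ht0]
  · have : (γ : ℂ) + t * Complex.I - γ = t * Complex.I := by ring
    rw [this]
    simp [abs_of_pos ht0, htε]
  · have hzsub : (γ : ℂ) + t * Complex.I - γ = t * Complex.I := by ring
    rw [hzsub]
    have him : ((μ : ℂ) / ((t : ℂ) * Complex.I)).im = -(μ / t) := by
      rw [div_eq_mul_inv]
      have : ((t : ℂ) * Complex.I)⁻¹ = -(t : ℝ)⁻¹ * Complex.I := by
        field_simp
        ring_nf
        simp [Complex.I_sq]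
      rw [this]
      simp
      field_simp
    rw [Complex.add_im, him]
    have hdist : dist ((γ : ℂ) + t * Complex.I) (γ : ℂ) < δ := by
      rw [Complex.dist_eq]
      have : (γ : ℂ) + t * Complex.I - γ = t * Complex.I := by ring
      rw [this]
      simpa [abs_of_pos ht0] using htδ
    have := hδ' hdist
    rw [Complex.dist_eq] at this
    have himg : (g ((γ : ℂ) + t * Complex.I)).im < M := by
      have h1 : |(g ((γ : ℂ) + t * Complex.I) - g γ).im| ≤ ‖_‖ :=
        Complex.abs_im_le_norm _
      have h2 : (g ((γ : ℂ) + t * Complex.I)).im - (g γ).im < 1 := by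
        have := h1.trans_lt this
        rw [Complex.sub_im] at this
        exact (abs_lt.mp this).2
      have : (g γ).im ≤ |(g γ).im| := le_abs_self _
      simp only [hM]; linarith
    have hμt : M < μ / t := by
      rw [lt_div_iff₀ ht0]
      calc M * t < M * (μ / M) := by exact (mul_lt_mul_iff_right₀ hM0).mpr htM
        _ = μ := by field_simp
    linarith


/-- A simple real pole with positive real residue is incompatible with mapping
the upper half-plane into itself: if `r(z) = μ/(z-γ) + g(z)` with `γ ∈ ℝ`,
`μ > 0` real, and `g` analytic on an open neighborhood of `γ`, then arbitrarily
close to `γ` there are points `z` of the upper half-plane with `Im r(z) < 0`.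
Consequently, if a function analytic near `γ` of the form `μ'/(z-γ) + g'(z)`
(a simple pole at `γ` with real residue `μ' ≠ 0`) maps points of the upper
half-plane near `γ` into the upper half-plane, then `μ' < 0`. -/
theorem simple_real_pole_residue_neg
    (γ : ℝ) (μ : ℝ) (hμ : 0 < μ)
    (g : ℂ → ℂ) (V : Set ℂ) (hV : IsOpen V) (hγV : (γ : ℂ) ∈ V)
    (hg : DifferentiableOn ℂ g V)
    (r : ℂ → ℂ) (hr : ∀ z : ℂ, z ≠ (γ : ℂ) → r z = (μ : ℂ) / (z - γ) + g z) :
    (∀ ε : ℝ, 0 < ε →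
      ∃ z : ℂ, 0 < z.im ∧ ‖z - γ‖ < ε ∧ (r z).im < 0) ∧
    (∀ (μ' : ℝ) (g' : ℂ → ℂ) (V' : Set ℂ), IsOpen V' → (γ : ℂ) ∈ V' →
      DifferentiableOn ℂ g' V' → μ' ≠ 0 →
      (∀ z ∈ V', 0 < z.im → 0 < ((μ' : ℂ) / (z - γ) + g' z).im) →
      μ' < 0) := by
  constructor
  · intro ε hε
    obtain ⟨z, hz1, hz2, hz3⟩ := aux_pole γ μ hμ g V hV hγV hg ε hε
    refine ⟨z, hz1, hz2, ?_⟩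
    have hzne : z ≠ (γ : ℂ) := by
      intro h
      rw [h] at hz1
      simp at hz1
    rw [hr z hzne]
    exact hz3
  · intro μ' g' V' hV' hγV' hg' hμ' hmap
    by_contra hle
    push_neg at hle
    have hμ'pos : 0 < μ' := lt_of_le_of_ne hle (Ne.symm hμ')
    obtain ⟨ε, hε, hball⟩ := Metric.isOpen_iff.mp hV' _ hγV'
    obtain ⟨z, hz1, hz2, hz3⟩ := aux_pole γ μ' hμ'pos g' V' hV' hγV' hg' ε hε
    have hzV : z ∈ V' := hball (by rwa [Metric.mem_ball, Complex.dist_eq])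
    exact absurd (hmap z hzV hz1) (not_lt.mpr hz3.le)
end

section
/- Let r be a rational function such that r maps the upper half-plane ℂ⁺ = {z : Im z > 0} into itself, r maps ℝ minus its finitely many poles into ℝ, and lim_{|z| → ∞} r(z)/z = 1. Then there exist α ∈ ℝ, distinct real numbers γ₁, …, γₙ, and negative real numbers μ₁, …, μₙ such that r(z) = z + α + Σᵢ₌₁ⁿ μᵢ/(z − γᵢ). -/
open Filter

namespace RationalInnerSelfmap
open Polynomial Complex

private lemma conj_poly_eval (p : ℂ[X]) (z : ℂ) :
    (starRingEnd ℂ) (p.eval z) = (p.map (starRingEnd ℂ)).eval ((starRingEnd ℂ) z) := by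
  rw [Polynomial.eval_map]
  exact (Polynomial.eval₂_hom _ _).symm

private lemma selfconj_eval_real {p : ℂ[X]} (hp : p.map (starRingEnd ℂ) = p) (x : ℝ) :
    (starRingEnd ℂ) (p.eval (x:ℂ)) = p.eval (x:ℂ) := by
  rw [conj_poly_eval, hp, Complex.conj_ofReal]

private lemma local_pole (p q : ℂ[X]) (hq0 : q ≠ 0)
    (hpc : p.map (starRingEnd ℂ) = p) (hqc : q.map (starRingEnd ℂ) = q)
    (him : ∀ z : ℂ, 0 < z.im → 0 < (p.eval z / q.eval z).im)
    (hnr : ∀ z : ℂ, 0 < z.im → q.eval z ≠ 0)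
    (γ : ℝ) (hroot : q.eval (γ:ℂ) = 0) (hpγ : p.eval (γ:ℂ) ≠ 0) :
    rootMultiplicity (γ:ℂ) q = 1 ∧
      ∀ q₁ : ℂ[X], q = (X - C (γ:ℂ)) * q₁ →
        ∃ μ : ℝ, μ < 0 ∧ (μ:ℂ) * q₁.eval (γ:ℂ) = p.eval (γ:ℂ) := by
  set k := rootMultiplicity (γ:ℂ) q with hk
  have hk1 : 0 < k := (rootMultiplicity_pos hq0).2 hroot
  set Q1 := q /ₘ (X - C (γ:ℂ)) ^ k with hQ1def
  have hfact : (X - C (γ:ℂ)) ^ k * Q1 = q := pow_mul_divByMonic_rootMultiplicity_eq q _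
  have hQ1γ : Q1.eval (γ:ℂ) ≠ 0 := eval_divByMonic_pow_rootMultiplicity_ne_zero _ hq0
  have hXk0 : ((X : ℂ[X]) - C (γ:ℂ)) ^ k ≠ 0 := pow_ne_zero _ (X_sub_C_ne_zero _)
  have hXc : (((X : ℂ[X]) - C (γ:ℂ)) ^ k).map (starRingEnd ℂ) = (X - C (γ:ℂ)) ^ k := by
    simp [Polynomial.map_pow, Polynomial.map_sub, Complex.conj_ofReal]
  have hQ1c : Q1.map (starRingEnd ℂ) = Q1 := by
    have h := congrArg (Polynomial.map (starRingEnd ℂ)) hfact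
    rw [Polynomial.map_mul, hXc, hqc] at h
    exact mul_left_cancel₀ hXk0 (h.trans hfact.symm)
  set c : ℂ := p.eval (γ:ℂ) / Q1.eval (γ:ℂ) with hcdef
  have hc0 : c ≠ 0 := div_ne_zero hpγ hQ1γ
  have hcreal : (starRingEnd ℂ) c = c := by
    rw [hcdef, map_div₀, selfconj_eval_real hpc, selfconj_eval_real hQ1c]
  obtain ⟨cr, hcr⟩ := Complex.conj_eq_iff_real.mp hcreal
  have hcr0 : cr ≠ 0 := by
    rintro rfl
    rw [hcr] at hc0
    simp at hc0
  have key : ∀ θ : ℝ, 0 < θ → θ < Real.pi → cr * Real.sin (k * θ) ≤ 0 := by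
    intro θ hθ0 hθπ
    have hsθ : 0 < Real.sin θ := Real.sin_pos_of_pos_of_lt_pi hθ0 hθπ
    set w : ℂ := Complex.exp ((θ:ℝ) * Complex.I) with hw
    set e : ℂ := Complex.exp ((((k:ℝ) * θ : ℝ) : ℂ) * Complex.I) with he
    have hwk : w ^ k = e := by
      rw [hw, he, ← Complex.exp_nat_mul]
      push_cast
      ring_nf
    have he0 : e ≠ 0 := Complex.exp_ne_zero _
    set zf : ℝ → ℂ := fun ε => (γ:ℂ) + (ε:ℂ) * w with hzf
    have hzim : ∀ ε : ℝ, 0 < ε → 0 < (zf ε).im := by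
      intro ε hε
      have h1 : (zf ε).im = ε * Real.sin θ := by
        simp [hzf, hw, Complex.add_im, Complex.im_ofReal_mul, Complex.exp_ofReal_mul_I_im]
      rw [h1]; positivity
    set F : ℝ → ℂ := fun ε => p.eval (zf ε) / (e * Q1.eval (zf ε)) with hF
    have hBpos : ∀ ε : ℝ, 0 < ε → 0 ≤ (F ε).im := by
      intro ε hε
      have hz := hzim ε hε
      have hqz : q.eval (zf ε) ≠ 0 := hnr _ hz
      have hQ1z : Q1.eval (zf ε) ≠ 0 := by
        intro h0
        apply hqz
        rw [← hfact]
        simp [Polynomial.eval_mul, h0]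
      have hzγ : zf ε - (γ:ℂ) = (ε:ℂ) * w := by rw [hzf]; ring
      have hqeq : q.eval (zf ε) = ((ε:ℂ))^k * (e * Q1.eval (zf ε)) := by
        conv_lhs => rw [← hfact]
        rw [Polynomial.eval_mul, Polynomial.eval_pow, Polynomial.eval_sub,
          Polynomial.eval_X, Polynomial.eval_C, hzγ, mul_pow, hwk]
        ring
      have hε0 : ((ε:ℂ))^k ≠ 0 := pow_ne_zero _ (by exact_mod_cast hε.ne')
      have hFeq : F ε = ((ε^k : ℝ):ℂ) * (p.eval (zf ε) / q.eval (zf ε)) := by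
        rw [hF, hqeq]
        push_cast
        field_simp
      have h1 : 0 < (p.eval (zf ε) / q.eval (zf ε)).im := him _ hz
      rw [hFeq, Complex.im_ofReal_mul]
      have : (0:ℝ) < ε^k := pow_pos hε k
      positivity
    have hzfc : Continuous zf := by
      rw [hzf]; exact continuous_const.add (Complex.continuous_ofReal.mul continuous_const)
    have hz0 : zf 0 = (γ:ℂ) := by simp [hzf]
    have hd0 : e * Q1.eval (zf 0) ≠ 0 := by
      rw [hz0]; exact mul_ne_zero he0 hQ1γ
    have hcont : ContinuousAt F 0 := by
      apply ContinuousAt.div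
      · exact ((Polynomial.continuous p).comp hzfc).continuousAt
      · exact (continuous_const.mul ((Polynomial.continuous Q1).comp hzfc)).continuousAt
      · exact hd0
    have hlim0 : Tendsto (fun ε => (F ε).im) (nhdsWithin 0 (Set.Ioi 0)) (nhds ((F 0).im)) :=
      ((Complex.continuous_im.continuousAt.comp hcont).tendsto).mono_left nhdsWithin_le_nhds
    have hge : 0 ≤ (F 0).im := by
      refine ge_of_tendsto hlim0 ?_
      filter_upwards [self_mem_nhdsWithin] with ε hε
      exact hBpos ε hε
    have hF0 : F 0 = (cr:ℂ) * Complex.exp (((-((k:ℝ)*θ) : ℝ):ℂ) * Complex.I) := by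
      have hexp : Complex.exp (((-((k:ℝ)*θ) : ℝ):ℂ) * Complex.I) = e⁻¹ := by
        rw [he, ← Complex.exp_neg]
        push_cast
        ring_nf
      rw [hF]
      show p.eval (zf 0) / (e * Q1.eval (zf 0)) = _
      rw [hz0, hexp, mul_comm, ← div_div, div_eq_mul_inv (p.eval (γ:ℂ) / _), ← hcdef, hcr]
    have him0 : (F 0).im = cr * Real.sin (-((k:ℝ)*θ)) := by
      rw [hF0, Complex.im_ofReal_mul, Complex.exp_ofReal_mul_I_im]
    rw [him0, Real.sin_neg] at hge
    linarith
  have hkR : (1:ℝ) ≤ (k:ℝ) := by exact_mod_cast hk1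
  have hπ := Real.pi_pos
  have h2k : (0:ℝ) < 2*(k:ℝ) := by linarith
  have hcrneg : cr < 0 := by
    have h1 := key (Real.pi/(2*(k:ℝ))) (div_pos hπ h2k) (by
      rw [div_lt_iff₀ h2k]; nlinarith)
    have hkθ : (k:ℝ) * (Real.pi/(2*(k:ℝ))) = Real.pi/2 := by
      field_simp
    rw [hkθ, Real.sin_pi_div_two, mul_one] at h1
    exact lt_of_le_of_ne h1 hcr0
  have hkeq : k = 1 := by
    by_contra hne
    have hk2 : 2 ≤ k := by omega
    have hkR2 : (2:ℝ) ≤ (k:ℝ) := by exact_mod_cast hk2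
    have h2 := key (3*Real.pi/(2*(k:ℝ))) (div_pos (by linarith) h2k) (by
      rw [div_lt_iff₀ h2k]; nlinarith)
    have hkθ : (k:ℝ) * (3*Real.pi/(2*(k:ℝ))) = Real.pi/2 + Real.pi := by
      field_simp; ring
    rw [hkθ, Real.sin_add_pi, Real.sin_pi_div_two] at h2
    nlinarith
  refine ⟨hkeq, ?_⟩
  intro q₁ hq₁
  have hfact1 : (X - C (γ:ℂ)) * Q1 = q := by
    rw [← hfact, hkeq, pow_one]
  have hq₁Q1 : q₁ = Q1 := by
    apply mul_left_cancel₀ (X_sub_C_ne_zero (γ:ℂ))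
    rw [hfact1, ← hq₁]
  refine ⟨cr, hcrneg, ?_⟩
  rw [hq₁Q1, ← hcr, hcdef, div_mul_cancel₀ _ hQ1γ]

theorem conj_steps (r : RatFunc ℂ)
    (hself : ∀ z : ℂ, 0 < z.im → 0 < (r.eval (RingHom.id ℂ) z).im)
    (hinner : ∀ x : ℝ, r.denom.eval (x : ℂ) ≠ 0 →
      (r.eval (RingHom.id ℂ) (x : ℂ)).im = 0) :
    r.num.map (starRingEnd ℂ) = r.num ∧ r.denom.map (starRingEnd ℂ) = r.denom := by
  classical
  set p : ℂ[X] := r.num with hp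
  set q : ℂ[X] := r.denom with hq
  have hq0 : q ≠ 0 := r.denom_ne_zero
  have hqmonic : q.Monic := r.monic_denom
  have hcop : IsCoprime p q := r.isCoprime_num_denom
  have heval : ∀ z : ℂ, r.eval (RingHom.id ℂ) z = p.eval z / q.eval z := fun z => rfl
  have hfin : Set.Finite {x : ℝ | q.eval (x:ℂ) = 0} := by
    have hsub : {x : ℝ | q.eval (x:ℂ) = 0} ⊆ (fun x : ℝ => (x:ℂ)) ⁻¹' {z : ℂ | q.IsRoot z} :=
      fun x hx => hx
    have hfinC : Set.Finite {z : ℂ | q.IsRoot z} := by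
      by_contra hinf
      exact hq0 (q.eq_zero_of_infinite_isRoot hinf)
    exact Set.Finite.subset (hfinC.preimage (Set.injOn_of_injective Complex.ofReal_injective)) hsub
  have hSinf : Set.Infinite {x : ℝ | q.eval (x:ℂ) ≠ 0} := by
    have h := hfin.infinite_compl
    have : {x : ℝ | q.eval (x:ℂ) = 0}ᶜ = {x : ℝ | q.eval (x:ℂ) ≠ 0} := by
      ext x; simp
    rwa [this] at h
  have hPQ : p * q.map (starRingEnd ℂ) = p.map (starRingEnd ℂ) * q := by
    apply Polynomial.eq_of_infinite_eval_eq
    apply Set.Infinite.mono (s := (fun x : ℝ => (x:ℂ)) '' {x : ℝ | q.eval (x:ℂ) ≠ 0})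
    · rintro z ⟨x, hx, rfl⟩
      have hx' : q.eval (x:ℂ) ≠ 0 := hx
      have him : (p.eval (x:ℂ) / q.eval (x:ℂ)).im = 0 := by
        have h := hinner x hx'
        rwa [heval] at h
      have hconj : (starRingEnd ℂ) (p.eval (x:ℂ)) / (starRingEnd ℂ) (q.eval (x:ℂ))
          = p.eval (x:ℂ) / q.eval (x:ℂ) := by
        rw [← map_div₀]
        exact Complex.conj_eq_iff_im.mpr him
      have hqc0 : (starRingEnd ℂ) (q.eval (x:ℂ)) ≠ 0 := by simpa using hx'
      rw [div_eq_div_iff hqc0 hx'] at hconj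
      have hpev : (p.map (starRingEnd ℂ)).eval (x:ℂ) = (starRingEnd ℂ) (p.eval (x:ℂ)) := by
        rw [conj_poly_eval, Complex.conj_ofReal]
      have hqev : (q.map (starRingEnd ℂ)).eval (x:ℂ) = (starRingEnd ℂ) (q.eval (x:ℂ)) := by
        rw [conj_poly_eval, Complex.conj_ofReal]
      simp only [Set.mem_setOf_eq, Polynomial.eval_mul]
      rw [hpev, hqev]
      linear_combination hconj.symm
    · exact hSinf.image (Set.injOn_of_injective Complex.ofReal_injective)
  have hqconj : q.map (starRingEnd ℂ) = q := by
    have hdvd : q ∣ q.map (starRingEnd ℂ) :=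
      (hcop.symm).dvd_of_dvd_mul_left (by rw [hPQ]; exact dvd_mul_left q _)
    obtain ⟨t, ht⟩ := hdvd
    have hmapmonic : (q.map (starRingEnd ℂ)).Monic := hqmonic.map _
    have ht0 : t ≠ 0 := by
      rintro rfl
      rw [mul_zero] at ht
      exact hmapmonic.ne_zero ht
    have hdegt : t.natDegree = 0 := by
      have h1 : (q.map (starRingEnd ℂ)).natDegree = q.natDegree :=
        q.natDegree_map (starRingEnd ℂ)
      rw [ht, Polynomial.natDegree_mul hq0 ht0] at h1
      omega
    obtain ⟨a, rfl⟩ := Polynomial.natDegree_eq_zero.mp hdegt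
    have ha : q.leadingCoeff * a = 1 := by
      have := hmapmonic.leadingCoeff
      rw [ht, Polynomial.leadingCoeff_mul, Polynomial.leadingCoeff_C] at this
      exact this
    rw [hqmonic.leadingCoeff, one_mul] at ha
    rw [ht, ha, Polynomial.C_1, mul_one]
  have hpconj : p.map (starRingEnd ℂ) = p := by
    have h := hPQ
    rw [hqconj] at h
    exact (mul_right_cancel₀ hq0 h).symm
  exact ⟨hpconj, hqconj⟩

theorem rest_steps (r : RatFunc ℂ)
    (hself : ∀ z : ℂ, 0 < z.im → 0 < (r.eval (RingHom.id ℂ) z).im)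
    (hlim : Tendsto (fun z : ℂ => r.eval (RingHom.id ℂ) z / z)
      (Bornology.cobounded ℂ) (nhds 1))
    (hpconj : r.num.map (starRingEnd ℂ) = r.num)
    (hqconj : r.denom.map (starRingEnd ℂ) = r.denom)
    (local_pole : ∀ (p q : ℂ[X]), q ≠ 0 →
      p.map (starRingEnd ℂ) = p → q.map (starRingEnd ℂ) = q →
      (∀ z : ℂ, 0 < z.im → 0 < (p.eval z / q.eval z).im) →
      (∀ z : ℂ, 0 < z.im → q.eval z ≠ 0) →
      ∀ γ : ℝ, q.eval (γ:ℂ) = 0 → p.eval (γ:ℂ) ≠ 0 →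
      rootMultiplicity (γ:ℂ) q = 1 ∧
        ∀ q₁ : ℂ[X], q = (X - C (γ:ℂ)) * q₁ →
          ∃ μ : ℝ, μ < 0 ∧ (μ:ℂ) * q₁.eval (γ:ℂ) = p.eval (γ:ℂ)) :
    ∃ (α : ℝ) (n : ℕ) (γ μ : Fin n → ℝ),
      Function.Injective γ ∧ (∀ i, μ i < 0) ∧
      ∀ z : ℂ, (∀ i, z ≠ (γ i : ℂ)) →
        r.eval (RingHom.id ℂ) z = z + α + ∑ i, (μ i : ℂ) / (z - γ i) := by
  classical
  set p : ℂ[X] := r.num with hp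
  set q : ℂ[X] := r.denom with hq
  have hq0 : q ≠ 0 := r.denom_ne_zero
  have hqmonic : q.Monic := r.monic_denom
  have hcop : IsCoprime p q := r.isCoprime_num_denom
  have heval : ∀ z : ℂ, r.eval (RingHom.id ℂ) z = p.eval z / q.eval z := fun z => rfl
  have him : ∀ z : ℂ, 0 < z.im → 0 < (p.eval z / q.eval z).im := by
    intro z hz
    have h := hself z hz
    rwa [heval] at h
  have hnr : ∀ z : ℂ, 0 < z.im → q.eval z ≠ 0 := by
    intro z hz h0
    have h1 := him z hz
    rw [h0, div_zero] at h1
    simp at h1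
  have hrootsreal : ∀ w : ℂ, q.eval w = 0 → w.im = 0 := by
    intro w hw
    by_contra him0
    rcases lt_or_gt_of_ne him0 with hlt | hgt
    · have hconjroot : q.eval ((starRingEnd ℂ) w) = 0 := by
        have h := conj_poly_eval q w
        rw [hqconj] at h
        rw [← h, hw, map_zero]
      have : 0 < ((starRingEnd ℂ) w).im := by
        rw [Complex.conj_im]; linarith
      exact hnr _ this hconjroot
    · exact hnr w hgt hw
  have hproot : ∀ w : ℂ, q.eval w = 0 → p.eval w ≠ 0 := by
    intro w hw hp0
    obtain ⟨u, v, huv⟩ := hcop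
    have h := congrArg (Polynomial.eval w) huv
    simp [Polynomial.eval_add, Polynomial.eval_mul, hp0, hw] at h
  -- roots enumeration
  have hsplits : q.Splits := IsAlgClosed.splits q
  have hqroots : q = (q.roots.map fun a => X - C a).prod :=
    hsplits.eq_prod_roots_of_monic hqmonic
  have hmult1 : ∀ w ∈ q.roots, rootMultiplicity w q = 1 := by
    intro w hw
    have hweval : q.eval w = 0 := by
      rw [Polynomial.mem_roots hq0] at hw
      exact hw
    have hwim : w.im = 0 := hrootsreal w hweval
    have hwre : ((w.re : ℝ) : ℂ) = w := by
      apply Complex.ext <;> simp [hwim]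
    have h := (local_pole p q hq0 hpconj hqconj him hnr w.re (by rw [hwre]; exact hweval)
      (by rw [hwre]; exact hproot w hweval)).1
    rwa [hwre] at h
  have hnodup : q.roots.Nodup := by
    rw [Multiset.nodup_iff_count_le_one]
    intro a
    by_cases ha : a ∈ q.roots
    · rw [Polynomial.count_roots, hmult1 a ha]
    · simp [Multiset.count_eq_zero_of_notMem ha]
  set R : Finset ℂ := q.roots.toFinset with hR
  set n := R.card with hn
  set e := R.equivFin with he
  set γ : Fin n → ℝ := fun i => ((e.symm i : ℂ)).re with hγ
  have hγmem : ∀ i, ((e.symm i : ℂ)) ∈ q.roots := by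
    intro i
    exact Multiset.mem_toFinset.mp (e.symm i).2
  have hγeval : ∀ i, q.eval ((e.symm i : ℂ)) = 0 := by
    intro i
    have h := hγmem i
    rw [Polynomial.mem_roots hq0] at h
    exact h
  have hγcoe : ∀ i, ((γ i : ℝ) : ℂ) = (e.symm i : ℂ) := by
    intro i
    have him0 : ((e.symm i : ℂ)).im = 0 := hrootsreal _ (hγeval i)
    apply Complex.ext <;> simp [hγ, him0]
  have hγinj : Function.Injective γ := by
    intro i j hij
    have h : ((e.symm i : ℂ)) = ((e.symm j : ℂ)) := by
      rw [← hγcoe, ← hγcoe, hij]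
    exact e.symm.injective (Subtype.coe_injective h)
  have hqfact : q = ∏ i : Fin n, (X - C ((γ i : ℝ) : ℂ)) := by
    conv_lhs => rw [hqroots]
    have h1 : q.roots = R.val := by
      rw [hR, Multiset.toFinset_val, Multiset.dedup_eq_self.mpr hnodup]
    rw [h1]
    have h2 : (R.val.map fun a => X - C a).prod = ∏ a ∈ R, (X - C a) := rfl
    rw [h2, ← Finset.prod_coe_sort R (fun a => X - C a)]
    rw [← Fintype.prod_equiv e.symm (fun i => X - C ((γ i : ℝ) : ℂ))
      (fun x : R => X - C (x : ℂ)) (fun i => by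
        show X - C ((γ i : ℝ):ℂ) = X - C ((e.symm i : ℂ))
        rw [hγcoe])]
  set q1 : Fin n → ℂ[X] := fun i => ∏ j ∈ Finset.univ.erase i, (X - C ((γ j : ℝ) : ℂ)) with hq1
  have hq1fact : ∀ i, q = (X - C ((γ i : ℝ):ℂ)) * q1 i := by
    intro i
    rw [hqfact, hq1]
    exact (Finset.mul_prod_erase _ _ (Finset.mem_univ i)).symm
  have hqev0 : ∀ i, q.eval ((γ i : ℝ):ℂ) = 0 := by
    intro i
    rw [hq1fact i]
    simp
  have key := fun i => (local_pole p q hq0 hpconj hqconj him hnr (γ i) (hqev0 i)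
    (hproot _ (hqev0 i))).2 (q1 i) (hq1fact i)
  choose μ hμneg hμeq using key
  set g : ℂ[X] := p - X * q - ∑ i : Fin n, C ((μ i : ℝ):ℂ) * q1 i with hg
  have hγcinj : Function.Injective (fun i : Fin n => ((γ i : ℝ):ℂ)) := by
    intro i j hij
    simp only [] at hij
    exact hγinj (by exact_mod_cast hij)
  have hdvd : q ∣ g := by
    rw [hqfact]
    apply Finset.prod_dvd_of_coprime
    · exact (Polynomial.pairwise_coprime_X_sub_C hγcinj).set_pairwise _
    · intro i _
      rw [Polynomial.dvd_iff_isRoot]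
      show g.eval _ = 0
      rw [hg]
      simp only [Polynomial.eval_sub, Polynomial.eval_mul, Polynomial.eval_X,
        Polynomial.eval_finset_sum, Polynomial.eval_C]
      rw [hqev0 i]
      have hsum : ∑ j : Fin n, ((μ j : ℝ):ℂ) * (q1 j).eval ((γ i:ℝ):ℂ)
          = ((μ i:ℝ):ℂ) * (q1 i).eval ((γ i:ℝ):ℂ) := by
        apply Finset.sum_eq_single
        · intro j _ hji
          have h0 : (q1 j).eval ((γ i:ℝ):ℂ) = 0 := by
            rw [hq1]
            simp only [Polynomial.eval_prod]
            apply Finset.prod_eq_zero (Finset.mem_erase.mpr ⟨Ne.symm hji, Finset.mem_univ i⟩)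
            simp
          rw [h0, mul_zero]
        · intro hni
          exact absurd (Finset.mem_univ i) hni
      rw [hsum, hμeq]
      ring
  obtain ⟨h, hgh⟩ := hdvd
  have hid : ∀ z : ℂ, (∀ i, z ≠ ((γ i:ℝ):ℂ)) → r.eval (RingHom.id ℂ) z
      = z + h.eval z + ∑ i, ((μ i:ℝ):ℂ) / (z - ((γ i:ℝ):ℂ)) := by
    intro z hz
    have hzi : ∀ i, z - ((γ i:ℝ):ℂ) ≠ 0 := fun i => sub_ne_zero.mpr (hz i)
    have hzq : q.eval z ≠ 0 := by
      rw [hqfact, Polynomial.eval_prod]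
      exact Finset.prod_ne_zero_iff.mpr fun i _ => by simpa using hzi i
    have hpeq : p = X * q + (∑ i : Fin n, C ((μ i:ℝ):ℂ) * q1 i) + q * h := by
      rw [← hgh, hg]
      ring
    rw [heval, hpeq]
    simp only [Polynomial.eval_add, Polynomial.eval_mul, Polynomial.eval_X,
      Polynomial.eval_finset_sum, Polynomial.eval_C]
    rw [add_div, add_div, mul_div_cancel_right₀ _ hzq, mul_comm (q.eval z) (h.eval z),
      mul_div_cancel_right₀ _ hzq, Finset.sum_div]
    have hterm : ∀ i ∈ Finset.univ, ((μ i:ℝ):ℂ) * (q1 i).eval z / q.eval z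
        = ((μ i:ℝ):ℂ) / (z - ((γ i:ℝ):ℂ)) := by
      intro i _
      have hq1z : (q1 i).eval z ≠ 0 := by
        intro h0
        apply hzq
        rw [hq1fact i]
        simp [h0]
      have hQz : q.eval z = (z - ((γ i:ℝ):ℂ)) * (q1 i).eval z := by
        rw [hq1fact i]
        simp
      rw [hQz, mul_comm (z - ((γ i:ℝ):ℂ)) _, ← div_div, mul_div_cancel_right₀ _ hq1z]
    rw [Finset.sum_congr rfl hterm]
    ring
  -- limits
  have hnormT : Tendsto (fun z : ℂ => ‖z‖) (Bornology.cobounded ℂ) atTop :=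
    tendsto_norm_cobounded_atTop
  have hevne : ∀ᶠ z : ℂ in Bornology.cobounded ℂ, (∀ i, z ≠ ((γ i:ℝ):ℂ)) ∧ z ≠ 0 := by
    apply Filter.Eventually.and
    · rw [eventually_all]
      intro i
      filter_upwards [hnormT.eventually_gt_atTop ‖((γ i:ℝ):ℂ)‖] with z hz
      rintro rfl
      exact lt_irrefl _ hz
    · filter_upwards [hnormT.eventually_gt_atTop 0] with z hz
      intro h0
      rw [h0] at hz
      simp at hz
  have hterm0 : ∀ i : Fin n, Tendsto (fun z : ℂ => ((μ i:ℝ):ℂ) / ((z - ((γ i:ℝ):ℂ)) * z))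
      (Bornology.cobounded ℂ) (nhds 0) := by
    intro i
    rw [tendsto_zero_iff_norm_tendsto_zero]
    have hdeg : (0:WithBot ℕ) < ((X - C ((γ i:ℝ):ℂ)) * X).degree := by
      rw [Polynomial.degree_mul, Polynomial.degree_X_sub_C, Polynomial.degree_X]
      decide
    have hd : Tendsto (fun z : ℂ => ‖((X - C ((γ i:ℝ):ℂ)) * X).eval z‖)
        (Bornology.cobounded ℂ) atTop :=
      Polynomial.tendsto_norm_atTop _ hdeg hnormT
    have hfun : (fun z : ℂ => ‖((μ i:ℝ):ℂ) / ((z - ((γ i:ℝ):ℂ)) * z)‖)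
        = fun z : ℂ => ‖((μ i:ℝ):ℂ)‖ / ‖((X - C ((γ i:ℝ):ℂ)) * X).eval z‖ := by
      funext z
      rw [norm_div]
      congr 2
      simp [Polynomial.eval_mul]
    rw [hfun]
    exact tendsto_const_nhds.div_atTop hd
  have hHdiv : Tendsto (fun z : ℂ => h.eval z / z) (Bornology.cobounded ℂ) (nhds 0) := by
    have hcongr : ∀ᶠ z : ℂ in Bornology.cobounded ℂ,
        (r.eval (RingHom.id ℂ) z / z - 1) - (∑ i, ((μ i:ℝ):ℂ) / ((z - ((γ i:ℝ):ℂ)) * z))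
        = h.eval z / z := by
      filter_upwards [hevne] with z hz
      obtain ⟨hzγ, hz0⟩ := hz
      rw [hid z hzγ, add_div, add_div, div_self hz0, Finset.sum_div]
      have : ∀ i ∈ Finset.univ, ((μ i:ℝ):ℂ) / (z - ((γ i:ℝ):ℂ)) / z
          = ((μ i:ℝ):ℂ) / ((z - ((γ i:ℝ):ℂ)) * z) := by
        intro i _
        rw [div_div]
      rw [Finset.sum_congr rfl this]
      ring
    have hT : Tendsto (fun z : ℂ =>
        (r.eval (RingHom.id ℂ) z / z - 1) - (∑ i, ((μ i:ℝ):ℂ) / ((z - ((γ i:ℝ):ℂ)) * z)))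
        (Bornology.cobounded ℂ) (nhds 0) := by
      have h1 := (hlim.sub (tendsto_const_nhds (x := (1:ℂ)))).sub
        (tendsto_finset_sum Finset.univ (fun i _ => hterm0 i))
      simpa using h1
    exact hT.congr' hcongr
  set h0 := h.coeff 0 with hh0
  have hXdvd : X ∣ (h - C h0) := Polynomial.X_dvd_iff.mpr (by simp [hh0])
  obtain ⟨K, hKdef⟩ := hXdvd
  have hh0div : Tendsto (fun z : ℂ => h0 / z) (Bornology.cobounded ℂ) (nhds 0) := by
    rw [tendsto_zero_iff_norm_tendsto_zero]
    have hfun : (fun z : ℂ => ‖h0 / z‖) = fun z : ℂ => ‖h0‖ / ‖z‖ := by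
      funext z; rw [norm_div]
    rw [hfun]
    exact tendsto_const_nhds.div_atTop hnormT
  have hKlim : Tendsto (fun z : ℂ => K.eval z) (Bornology.cobounded ℂ) (nhds 0) := by
    have hcongr : ∀ᶠ z : ℂ in Bornology.cobounded ℂ, h.eval z / z - h0 / z = K.eval z := by
      have hne : ∀ᶠ z : ℂ in Bornology.cobounded ℂ, z ≠ 0 := by
        filter_upwards [hnormT.eventually_gt_atTop 0] with z hz
        intro h0'
        rw [h0'] at hz
        simp at hz
      filter_upwards [hne] with z hz
      have hev : h.eval z = h0 + z * K.eval z := by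
        have hh : h = C h0 + X * K := by
          rw [← hKdef]; ring
        rw [hh]
        simp
      rw [hev, add_div, mul_comm z (K.eval z), mul_div_assoc, div_self hz, mul_one]
      ring
    have hT := hHdiv.sub hh0div
    rw [sub_zero] at hT
    exact hT.congr' hcongr
  have hKdeg : K.degree ≤ 0 := by
    by_contra hgt
    push_neg at hgt
    have h1 : Tendsto (fun z : ℂ => ‖K.eval z‖) (Bornology.cobounded ℂ) atTop :=
      Polynomial.tendsto_norm_atTop K hgt hnormT
    have h2 : Tendsto (fun z : ℂ => ‖K.eval z‖) (Bornology.cobounded ℂ) (nhds 0) := by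
      simpa using hKlim.norm
    exact not_tendsto_atTop_of_tendsto_nhds h2 h1
  have hKC : K = C (K.coeff 0) := Polynomial.eq_C_of_degree_le_zero hKdeg
  have hK0 : K.coeff 0 = 0 := by
    have h1 : Tendsto (fun _ : ℂ => K.coeff 0) (Bornology.cobounded ℂ) (nhds 0) := by
      apply hKlim.congr
      intro z
      rw [hKC]
      simp
    exact tendsto_nhds_unique tendsto_const_nhds h1
  have hhC : h = C h0 := by
    have hz : h - C h0 = 0 := by
      rw [hKdef, hKC, hK0]
      simp
    exact sub_eq_zero.mp hz
  -- reality of h0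
  have hgconj : g.map (starRingEnd ℂ) = g := by
    rw [hg]
    simp only [Polynomial.map_sub, Polynomial.map_mul, Polynomial.map_X, Polynomial.map_sum,
      Polynomial.map_C, hpconj, hqconj]
    congr 1
    apply Finset.sum_congr rfl
    intro i _
    congr 1
    · simp [Complex.conj_ofReal]
    · rw [hq1]
      simp [Polynomial.map_prod, Polynomial.map_sub, Complex.conj_ofReal]
  have hhconj : h.map (starRingEnd ℂ) = h := by
    have h1 := congrArg (Polynomial.map (starRingEnd ℂ)) hgh
    rw [hgconj, Polynomial.map_mul, hqconj, hgh] at h1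
    exact (mul_left_cancel₀ hq0 h1).symm
  have hh0re : ((h0.re : ℝ):ℂ) = h0 := by
    have hc : (starRingEnd ℂ) h0 = h0 := by
      have := congrArg (fun s : ℂ[X] => s.coeff 0) hhconj
      simpa [Polynomial.coeff_map] using this
    exact Complex.conj_eq_iff_re.mp hc
  refine ⟨h0.re, n, γ, μ, hγinj, hμneg, ?_⟩
  intro z hz
  rw [hid z hz, hhC, Polynomial.eval_C, hh0re]

end RationalInnerSelfmap

/-- Structure theorem for inner rational self-maps of the upper half-plane
with derivative 1 at infinity: if a rational function `r` maps
`ℂ⁺ = {Im z > 0}` into itself, maps `ℝ` minus its poles into `ℝ`, and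
`r(z)/z → 1` as `|z| → ∞`, then `r(z) = z + α + ∑ μᵢ/(z-γᵢ)` for some
`α ∈ ℝ`, distinct real `γᵢ` and negative real `μᵢ`. -/
theorem rational_inner_selfmap_structure (r : RatFunc ℂ)
    (hself : ∀ z : ℂ, 0 < z.im → 0 < (r.eval (RingHom.id ℂ) z).im)
    (hinner : ∀ x : ℝ, r.denom.eval (x : ℂ) ≠ 0 →
      (r.eval (RingHom.id ℂ) (x : ℂ)).im = 0)
    (hlim : Tendsto (fun z : ℂ => r.eval (RingHom.id ℂ) z / z)
      (Bornology.cobounded ℂ) (nhds 1)) :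
    ∃ (α : ℝ) (n : ℕ) (γ μ : Fin n → ℝ),
      Function.Injective γ ∧ (∀ i, μ i < 0) ∧
      ∀ z : ℂ, (∀ i, z ≠ (γ i : ℂ)) →
        r.eval (RingHom.id ℂ) z = z + α + ∑ i, (μ i : ℂ) / (z - γ i) := by
  obtain ⟨hpc, hqc⟩ := RationalInnerSelfmap.conj_steps r hself hinner
  exact RationalInnerSelfmap.rest_steps r hself hlim hpc hqc
    (fun p q h1 h2 h3 h4 h5 g h6 h7 => RationalInnerSelfmap.local_pole p q h1 h2 h3 h4 h5 g h6 h7)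
end
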